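/- Let $\psi : \mathrm{Homeo}_c(\mathbb{R}) \to \mathrm{Homeo}(\mathbb{R})$ be a continuous group morphism whose image has no global fixed point. Then there exists a homeomorphism $h$ of $\mathbb{R}$ such that for every compactly supported homeomorphism $f$, $\psi(f) = h \circ f \circ h^{-1}$. -/

import Mathlib

noncomputable section

instance instGroupHomeomorph (X : Type) [TopologicalSpace X] : Group (X ≃ₜ X) where
  mul f g := g.trans f
  one := Homeomorph.refl X
  inv := Homeomorph.symm
  mul_assoc a b c := Homeomorph.ext fun _ => rfl
  one_mul a := Homeomorph.ext fun _ => rfl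
  mul_one a := Homeomorph.ext fun _ => rfl
  inv_mul_cancel a := Homeomorph.ext fun x => a.symm_apply_apply x

@[simp] theorem homeo_mul_apply {X : Type} [TopologicalSpace X] (f g : X ≃ₜ X) (x : X) :
    (f * g) x = f (g x) := rfl

/-- The compact-open type topology on the group of homeomorphisms. -/
instance instTopHomeomorph (X Y : Type) [TopologicalSpace X] [TopologicalSpace Y] :
    TopologicalSpace (X ≃ₜ Y) :=
  TopologicalSpace.induced
    (fun f => ((⟨f, f.continuous⟩ : C(X, Y)), (⟨f.symm, f.symm.continuous⟩ : C(Y, X))))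
    inferInstance

/-- The group `Homeo_c(ℝ)` of compactly supported homeomorphisms of the real line,
as a subgroup of the group of homeomorphisms of `ℝ`. -/
def HomeoC : Subgroup (ℝ ≃ₜ ℝ) where
  carrier := {f | ∃ C : Set ℝ, IsCompact C ∧ ∀ x ∉ C, f x = x}
  one_mem' := ⟨∅, isCompact_empty, fun _ _ => rfl⟩
  mul_mem' := by
    rintro a b ⟨C, hC, ha⟩ ⟨D, hD, hb⟩
    refine ⟨C ∪ D, hC.union hD, fun x hx => ?_⟩
    have hxC : x ∉ C := fun h => hx (Or.inl h)
    have hxD : x ∉ D := fun h => hx (Or.inr h)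
    show a (b x) = x
    rw [hb x hxD, ha x hxC]
  inv_mem' := by
    rintro a ⟨C, hC, ha⟩
    exact ⟨C, hC, fun x hx => a.symm_apply_eq.mpr (ha x hx).symm⟩

/-- `g` pointwise fixes a neighbourhood of `A`. -/
def FixesNbhd (g : ℝ ≃ₜ ℝ) (A : Set ℝ) : Prop :=
  ∃ U : Set ℝ, IsOpen U ∧ A ⊆ U ∧ ∀ x ∈ U, g x = x

namespace S6

open Set

abbrev HH := ℝ ≃ₜ ℝ

@[simp] lemma one_apply (x : ℝ) : (1 : HH) x = x := rfl
@[simp] lemma inv_apply (f : HH) (x : ℝ) : (f⁻¹ : HH) x = f.symm x := rfl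

/-- Build a homeomorphism of `ℝ` from a strictly monotone surjection. -/
def mk (F : ℝ → ℝ) (hm : StrictMono F) (hs : Function.Surjective F) : HH :=
  (StrictMono.orderIsoOfSurjective F hm hs).toHomeomorph

@[simp] lemma mk_apply (F : ℝ → ℝ) (hm : StrictMono F) (hs : Function.Surjective F) (x : ℝ) :
    mk F hm hs x = F x := rfl

/-- `f` is supported in `U` (with compact support). -/
def SuppIn (f : HH) (U : Set ℝ) : Prop :=
  ∃ C : Set ℝ, IsCompact C ∧ C ⊆ U ∧ ∀ x ∉ C, f x = x

lemma suppIn_mono {f : HH} {U V : Set ℝ} (h : U ⊆ V) (hf : SuppIn f U) : SuppIn f V := by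
  obtain ⟨C, h1, h2, h3⟩ := hf; exact ⟨C, h1, h2.trans h, h3⟩

lemma mem_homeoC {f : HH} {U : Set ℝ} (hf : SuppIn f U) : f ∈ HomeoC := by
  obtain ⟨C, h1, _, h3⟩ := hf; exact ⟨C, h1, h3⟩

lemma suppIn_univ {f : HH} (hf : f ∈ HomeoC) : SuppIn f univ := by
  obtain ⟨C, h1, h3⟩ := hf; exact ⟨C, h1, subset_univ _, h3⟩

lemma suppIn_one (U : Set ℝ) : SuppIn 1 U := ⟨∅, isCompact_empty, empty_subset _, fun _ _ => rfl⟩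

lemma suppIn_mul {f g : HH} {U : Set ℝ} (hf : SuppIn f U) (hg : SuppIn g U) :
    SuppIn (f * g) U := by
  obtain ⟨C, h1, h2, h3⟩ := hf; obtain ⟨D, k1, k2, k3⟩ := hg
  refine ⟨C ∪ D, h1.union k1, union_subset h2 k2, fun x hx => ?_⟩
  have hxC : x ∉ C := fun h => hx (Or.inl h)
  have hxD : x ∉ D := fun h => hx (Or.inr h)
  show f (g x) = x
  rw [k3 x hxD, h3 x hxC]

lemma suppIn_inv {f : HH} {U : Set ℝ} (hf : SuppIn f U) : SuppIn f⁻¹ U := by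
  obtain ⟨C, h1, h2, h3⟩ := hf
  exact ⟨C, h1, h2, fun x hx => f.symm_apply_eq.mpr (h3 x hx).symm⟩

/-- a compact set of reals lies in a symmetric interval -/
lemma compact_bound {K : Set ℝ} (hK : IsCompact K) : ∃ M : ℝ, 0 < M ∧ K ⊆ Icc (-M) M := by
  rcases K.eq_empty_or_nonempty with h | h
  · exact ⟨1, one_pos, by simp [h]⟩
  · obtain ⟨a, ha⟩ := hK.bddBelow
    obtain ⟨b, hb⟩ := hK.bddAbove
    refine ⟨max (|a|) (|b|) + 1, by positivity, fun x hx => ?_⟩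
    constructor
    · have := ha hx
      have : -(|a|) ≤ x := le_trans (neg_abs_le a) this
      nlinarith [le_max_left (|a|) (|b|)]
    · have := hb hx
      have : x ≤ |b| := le_trans this (le_abs_self b)
      nlinarith [le_max_right (|a|) (|b|)]

/-- a member of `HomeoC` is strictly monotone. -/
lemma strictMono_of_mem {f : HH} (hf : f ∈ HomeoC) : StrictMono ⇑f := by
  rcases Continuous.strictMono_of_inj f.continuous f.injective with h | h
  · exact h
  · exfalso
    obtain ⟨C, h1, h3⟩ := hf
    obtain ⟨M, hM, hMs⟩ := compact_bound h1
    have e1 : f (M + 1) = M + 1 := h3 _ (fun hc => by have := (hMs hc).2; linarith)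
    have e2 : f (M + 2) = M + 2 := h3 _ (fun hc => by have := (hMs hc).2; linarith)
    have := h (show (M:ℝ) + 1 < M + 2 by linarith)
    rw [e1, e2] at this; linarith

lemma strictMono_of_suppIn {f : HH} {U : Set ℝ} (hf : SuppIn f U) : StrictMono ⇑f :=
  strictMono_of_mem (mem_homeoC hf)

/-- images of supported sets under conjugation -/
lemma suppIn_conj {f : HH} {U : Set ℝ} (k : HH) (hf : SuppIn f U) :
    SuppIn (k * f * k⁻¹) (k '' U) := by
  obtain ⟨C, h1, h2, h3⟩ := hf
  refine ⟨k '' C, h1.image k.continuous, image_mono h2, fun x hx => ?_⟩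
  have : k.symm x ∉ C := fun hc => hx ⟨k.symm x, hc, k.apply_symm_apply x⟩
  show k (f (k.symm x)) = x
  rw [h3 _ this, k.apply_symm_apply]

/-- support carries into itself -/
lemma mapsTo_supp {f : HH} {C : Set ℝ} (h3 : ∀ x ∉ C, f x = x) : ∀ x ∈ C, f x ∈ C := by
  intro x hx
  by_contra hfx
  have : f (f x) = f x := h3 _ hfx
  have := f.injective this
  rw [this] at hfx; exact hfx hx

/-- disjointly supported homeomorphisms commute -/
lemma commute_of_disjoint {f g : HH} {U V : Set ℝ} (hf : SuppIn f U) (hg : SuppIn g V)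
    (hUV : Disjoint U V) : f * g = g * f := by
  obtain ⟨C, _, h2, h3⟩ := hf; obtain ⟨D, _, k2, k3⟩ := hg
  have hCD : ∀ x, x ∈ C → x ∉ D := fun x hx hxD =>
    (hUV.mono h2 k2).ne_of_mem hx hxD rfl
  apply Homeomorph.ext; intro x
  show f (g x) = g (f x)
  by_cases hxC : x ∈ C
  · have hxD : x ∉ D := hCD x hxC
    rw [k3 x hxD, k3 _ (hCD _ (mapsTo_supp h3 x hxC))]
  · by_cases hxD : x ∈ D
    · rw [h3 x hxC, h3 _ (fun hc => hCD _ hc (mapsTo_supp k3 x hxD))]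
    · rw [k3 x hxD, h3 x hxC, k3 x hxD]

end S6
namespace S6
open Set

lemma strictMono_min {f g : ℝ → ℝ} (hf : StrictMono f) (hg : StrictMono g) :
    StrictMono fun x => min (f x) (g x) := fun a b h =>
  lt_min ((min_le_left _ _).trans_lt (hf h)) ((min_le_right _ _).trans_lt (hg h))

lemma strictMono_max {f g : ℝ → ℝ} (hf : StrictMono f) (hg : StrictMono g) :
    StrictMono fun x => max (f x) (g x) := fun a b h =>
  max_lt ((hf h).trans_le (le_max_left _ _)) ((hg h).trans_le (le_max_right _ _))

/-- median of three reals -/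
def med (a b c : ℝ) : ℝ := max (min a b) (min (max a b) c)

lemma med_of_between₁ {a b c : ℝ} (h1 : a ≤ c) (h2 : c ≤ b) : med a b c = c := by
  unfold med
  rw [min_eq_left (h1.trans h2), max_eq_right (h1.trans h2), min_eq_right h2, max_eq_right h1]

lemma med_of_between₂ {a b c : ℝ} (h1 : b ≤ c) (h2 : c ≤ a) : med a b c = c := by
  unfold med
  rw [min_eq_right (h1.trans h2), max_eq_left (h1.trans h2), min_eq_right h2, max_eq_right h1]

lemma med_same {a c : ℝ} : med a a c = a := by
  unfold med
  rw [min_self, max_self]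
  exact max_eq_left (min_le_left a c)

lemma strictMono_med {f g : ℝ → ℝ} (hf : StrictMono f) (hg : StrictMono g) :
    StrictMono fun x => med (f x) (g x) x :=
  strictMono_max (strictMono_min hf hg)
    (strictMono_min (strictMono_max hf hg) strictMono_id)

lemma continuous_med {f g : ℝ → ℝ} (hf : Continuous f) (hg : Continuous g) :
    Continuous fun x => med (f x) (g x) x :=
  ((hf.min hg).max ((hf.max hg).min continuous_id))

section Phi

variable (s t u v : ℝ)

/-- affine pieces -/
def phiA (x : ℝ) : ℝ := x + (v - u) * ((x - s) / (u - s))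
def phiB (x : ℝ) : ℝ := x + (v - u) * ((t - x) / (t - u))

variable {s t u v}

lemma phiA_strictMono (hsu : s < u) (hsv : s < v) : StrictMono (phiA s u v) := by
  intro a b hab
  unfold phiA
  have h1 : 0 < u - s := by linarith
  have key : (b + (v - u) * ((b - s) / (u - s))) - (a + (v - u) * ((a - s) / (u - s)))
      = (b - a) * ((v - s) / (u - s)) := by field_simp; ring
  nlinarith [div_pos (show (0:ℝ) < v - s by linarith) h1]

lemma phiB_strictMono (hut : u < t) (hvt : v < t) : StrictMono (phiB t u v) := by
  intro a b hab
  unfold phiB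
  have h1 : 0 < t - u := by linarith
  have key : (b + (v - u) * ((t - b) / (t - u))) - (a + (v - u) * ((t - a) / (t - u)))
      = (b - a) * ((t - v) / (t - u)) := by field_simp; ring
  nlinarith [div_pos (show (0:ℝ) < t - v by linarith) h1]

variable (s t u v)

def phiFun (x : ℝ) : ℝ := med (phiA s u v x) (phiB t u v x) x

variable {s t u v}

lemma phiFun_strictMono (hsu : s < u) (hut : u < t) (hsv : s < v) (hvt : v < t) :
    StrictMono (phiFun s t u v) :=
  strictMono_med (phiA_strictMono hsu hsv) (phiB_strictMono hut hvt)

lemma phiFun_id_left (hsu : s < u) (hut : u < t) {x : ℝ} (hx : x ≤ s) :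
    phiFun s t u v x = x := by
  unfold phiFun
  have h1 : 0 < u - s := by linarith
  have h2 : 0 < t - u := by linarith
  have hA : phiA s u v x - x = (v - u) * ((x - s) / (u - s)) := by unfold phiA; ring
  have hB : phiB t u v x - x = (v - u) * ((t - x) / (t - u)) := by unfold phiB; ring
  have q1 : (x - s) / (u - s) ≤ 0 :=
    div_nonpos_iff.mpr (Or.inr ⟨by linarith, h1.le⟩)
  have q2 : 0 ≤ (t - x) / (t - u) := (div_pos (by linarith) h2).le
  rcases le_total (v - u) 0 with hc | hc
  · apply med_of_between₂ <;>
      nlinarith [mul_nonpos_of_nonpos_of_nonneg hc q2, mul_nonneg (neg_nonneg.2 hc) (neg_nonneg.2 q1)]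
  · apply med_of_between₁ <;>
      nlinarith [mul_nonneg hc q2, mul_nonpos_of_nonneg_of_nonpos hc q1]

lemma phiFun_id_right (hsu : s < u) (hut : u < t) {x : ℝ} (hx : t ≤ x) :
    phiFun s t u v x = x := by
  unfold phiFun
  have h1 : 0 < u - s := by linarith
  have h2 : 0 < t - u := by linarith
  have hA : phiA s u v x - x = (v - u) * ((x - s) / (u - s)) := by unfold phiA; ring
  have hB : phiB t u v x - x = (v - u) * ((t - x) / (t - u)) := by unfold phiB; ring
  have q1 : 0 ≤ (x - s) / (u - s) := (div_pos (by linarith) h1).le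
  have q2 : (t - x) / (t - u) ≤ 0 :=
    div_nonpos_iff.mpr (Or.inr ⟨by linarith, h2.le⟩)
  rcases le_total (v - u) 0 with hc | hc
  · apply med_of_between₁ <;>
      nlinarith [mul_nonpos_of_nonpos_of_nonneg hc q1, mul_nonneg (neg_nonneg.2 hc) (neg_nonneg.2 q2)]
  · apply med_of_between₂ <;>
      nlinarith [mul_nonneg hc q1, mul_nonpos_of_nonneg_of_nonpos hc q2]

lemma phiFun_u (hsu : s < u) (hut : u < t) : phiFun s t u v u = v := by
  unfold phiFun
  have hA : phiA s u v u = v := by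
    unfold phiA; rw [div_self (by linarith : u - s ≠ 0)]; ring
  have hB : phiB t u v u = v := by
    unfold phiB; rw [div_self (by linarith : t - u ≠ 0)]; ring
  rw [hA, hB, med_same]

lemma phiFun_continuous : Continuous (phiFun s t u v) := by
  unfold phiFun
  exact continuous_med (by unfold phiA; fun_prop) (by unfold phiB; fun_prop)

lemma phiFun_surjective (hsu : s < u) (hut : u < t) :
    Function.Surjective (phiFun s t u v) := by
  intro y
  rcases le_total y s with hy | hy
  · exact ⟨y, phiFun_id_left hsu hut hy⟩
  rcases le_total t y with hy' | hy'
  · exact ⟨y, phiFun_id_right hsu hut hy'⟩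
  have hst : s ≤ t := by linarith
  have : y ∈ Icc (phiFun s t u v s) (phiFun s t u v t) := by
    rw [phiFun_id_left hsu hut le_rfl, phiFun_id_right hsu hut le_rfl]
    exact ⟨hy, hy'⟩
  obtain ⟨x, _, hx⟩ := intermediate_value_Icc hst (phiFun_continuous).continuousOn this
  exact ⟨x, hx⟩

/-- A PL-type homeomorphism of `ℝ`, identity outside `[s,t]`, mapping `u ↦ v`. -/
def phiH (hsu : s < u) (hut : u < t) (hsv : s < v) (hvt : v < t) : HH :=
  mk (phiFun s t u v) (phiFun_strictMono hsu hut hsv hvt) (phiFun_surjective hsu hut)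

lemma phiH_apply (hsu : s < u) (hut : u < t) (hsv : s < v) (hvt : v < t) (x : ℝ) :
    phiH hsu hut hsv hvt x = phiFun s t u v x := rfl

lemma phiH_suppIn (hsu : s < u) (hut : u < t) (hsv : s < v) (hvt : v < t) :
    SuppIn (phiH hsu hut hsv hvt) (Icc s t) := by
  refine ⟨Icc s t, isCompact_Icc, subset_rfl, fun x hx => ?_⟩
  rw [phiH_apply]
  rcases not_and_or.mp hx with h | h
  · exact phiFun_id_left hsu hut (by push_neg at h; linarith)
  · exact phiFun_id_right hsu hut (by push_neg at h; linarith)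

lemma phiH_u (hsu : s < u) (hut : u < t) (hsv : s < v) (hvt : v < t) :
    phiH hsu hut hsv hvt u = v := by rw [phiH_apply]; exact phiFun_u hsu hut

lemma phiH_mono (hsu : s < u) (hut : u < t) (hsv : s < v) (hvt : v < t) :
    StrictMono ⇑(phiH hsu hut hsv hvt) := phiFun_strictMono hsu hut hsv hvt

end Phi

end S6
namespace S6
open Set

/-- the defining embedding into pairs of continuous maps -/
def pairCM (f : HH) : C(ℝ, ℝ) × C(ℝ, ℝ) :=
  ((⟨f, f.continuous⟩ : C(ℝ, ℝ)), (⟨f.symm, f.symm.continuous⟩ : C(ℝ, ℝ)))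

lemma continuous_pairCM : Continuous pairCM := continuous_induced_dom

lemma continuous_eval (x : ℝ) : Continuous fun f : HH => f x := by
  have h1 : Continuous fun f : HH => (pairCM f).1 := continuous_fst.comp continuous_pairCM
  have h2 : Continuous fun g : C(ℝ, ℝ) => g x := continuous_eval_const x
  exact h2.comp h1

lemma continuous_into {X : Type*} [TopologicalSpace X] (e : X → HH)
    (h1 : Continuous fun p : X × ℝ => e p.1 p.2)
    (h2 : Continuous fun p : X × ℝ => (e p.1).symm p.2) : Continuous e := by
  apply continuous_induced_rng.2
  apply Continuous.prodMk
  · exact ContinuousMap.continuous_of_continuous_uncurry _ h1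
  · exact ContinuousMap.continuous_of_continuous_uncurry _ h2

/-- joint continuity of inverses for families of increasing homeomorphisms. -/
lemma continuous_symm_aux {X : Type*} [TopologicalSpace X] (e : X → HH)
    (h1 : Continuous fun p : X × ℝ => e p.1 p.2)
    (hm : ∀ t, StrictMono ⇑(e t)) :
    Continuous fun p : X × ℝ => (e p.1).symm p.2 := by
  rw [continuous_iff_continuousAt]
  rintro ⟨t0, y0⟩
  set x0 := (e t0).symm y0 with hx0
  apply tendsto_order.2
  constructor
  · intro a ha
    have hkey : e t0 a < y0 := by
      have := (hm t0) ha
      rwa [(e t0).apply_symm_apply y0] at this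
    have c1 : Continuous fun p : X × ℝ => e p.1 a :=
      h1.comp (continuous_fst.prodMk continuous_const)
    have hopen : IsOpen {p : X × ℝ | e p.1 a < p.2} := isOpen_lt c1 continuous_snd
    have hmem : (t0, y0) ∈ {p : X × ℝ | e p.1 a < p.2} := hkey
    filter_upwards [hopen.mem_nhds hmem] with p hp
    have : e p.1 a < e p.1 ((e p.1).symm p.2) := by
      rwa [(e p.1).apply_symm_apply]
    exact (hm p.1).lt_iff_lt.mp this
  · intro b hb
    have hkey : y0 < e t0 b := by
      have := (hm t0) hb
      rwa [(e t0).apply_symm_apply y0] at this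
    have c1 : Continuous fun p : X × ℝ => e p.1 b :=
      h1.comp (continuous_fst.prodMk continuous_const)
    have hopen : IsOpen {p : X × ℝ | p.2 < e p.1 b} := isOpen_lt continuous_snd c1
    have hmem : (t0, y0) ∈ {p : X × ℝ | p.2 < e p.1 b} := hkey
    filter_upwards [hopen.mem_nhds hmem] with p hp
    have : e p.1 ((e p.1).symm p.2) < e p.1 b := by
      rwa [(e p.1).apply_symm_apply]
    exact (hm p.1).lt_iff_lt.mp this

/-! ### straight-line paths -/

/-- clamped parameter -/
def proj (t : ℝ) : ℝ := max 0 (min 1 t)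

lemma proj_mem (t : ℝ) : proj t ∈ Icc (0:ℝ) 1 :=
  ⟨le_max_left _ _, max_le zero_le_one (min_le_left _ _)⟩

lemma proj_zero : proj 0 = 0 := by unfold proj; simp
lemma proj_one : proj 1 = 1 := by unfold proj; norm_num

lemma continuous_proj : Continuous proj :=
  continuous_const.max (continuous_const.min continuous_id)

def lineFun (f g : HH) (t : ℝ) : ℝ → ℝ :=
  fun x => (1 - proj t) * f x + proj t * g x

lemma lineFun_strictMono (f g : HH) (hf : StrictMono ⇑f) (hg : StrictMono ⇑g) (t : ℝ) :
    StrictMono (lineFun f g t) := by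
  intro a b hab
  unfold lineFun
  obtain ⟨hp0, hp1⟩ := proj_mem t
  rcases eq_or_lt_of_le hp0 with h | h
  · rw [← h]; simpa using hf hab
  · have h2 : (1 - proj t) * f a ≤ (1 - proj t) * f b :=
      mul_le_mul_of_nonneg_left (hf hab).le (by linarith)
    have h3 : proj t * g a < proj t * g b := by
      exact mul_lt_mul_of_pos_left (hg hab) h
    linarith

lemma lineFun_id_outside (f g : HH) (t : ℝ) {x : ℝ} (hfx : f x = x) (hgx : g x = x) :
    lineFun f g t x = x := by unfold lineFun; rw [hfx, hgx]; ring

lemma lineFun_continuous (f g : HH) (t : ℝ) : Continuous (lineFun f g t) := by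
  unfold lineFun
  fun_prop

lemma lineFun_surjective (f g : HH) {Cf Cg : Set ℝ} (hCf : IsCompact Cf) (hCg : IsCompact Cg)
    (hf : ∀ x ∉ Cf, f x = x) (hg : ∀ x ∉ Cg, g x = x) (t : ℝ) :
    Function.Surjective (lineFun f g t) := by
  intro y
  obtain ⟨M, hM, hMs⟩ := compact_bound (hCf.union hCg)
  set R := max M |y| + 1 with hR
  have hRM : M < R := by have := le_max_left M |y|; simp [hR]; linarith
  have hRy : |y| < R := by have := le_max_right M |y|; simp [hR]; linarith
  have houtR : ∀ z : ℝ, M < |z| → lineFun f g t z = z := by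
    intro z hz
    have hzC : z ∉ Cf ∪ Cg := fun hc => by
      have := hMs hc
      have : |z| ≤ M := abs_le.mpr ⟨this.1, this.2⟩
      linarith
    exact lineFun_id_outside f g t (hf z fun hc => hzC (Or.inl hc))
      (hg z fun hc => hzC (Or.inr hc))
  have h1 : lineFun f g t (-R) = -R := houtR _ (by rw [abs_neg, abs_of_pos (by linarith)]; linarith)
  have h2 : lineFun f g t R = R := houtR _ (by rw [abs_of_pos (by linarith)]; linarith)
  have hy : y ∈ Icc (lineFun f g t (-R)) (lineFun f g t R) := by
    rw [h1, h2]
    exact ⟨neg_le_of_abs_le hRy.le, le_of_abs_le hRy.le⟩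
  obtain ⟨x, _, hx⟩ := intermediate_value_Icc (by linarith : (-R:ℝ) ≤ R)
    (lineFun_continuous f g t).continuousOn hy
  exact ⟨x, hx⟩

/-- the straight-line path between two compactly supported homeomorphisms. -/
def lineC (f g : HomeoC) (t : ℝ) : HomeoC := by
  refine ⟨mk (lineFun ↑f ↑g t)
    (lineFun_strictMono _ _ (strictMono_of_mem f.2) (strictMono_of_mem g.2) t) ?_, ?_⟩
  · exact lineFun_surjective _ _ f.2.choose_spec.1 g.2.choose_spec.1
      f.2.choose_spec.2 g.2.choose_spec.2 t
  · refine ⟨f.2.choose ∪ g.2.choose, f.2.choose_spec.1.union g.2.choose_spec.1, fun x hx => ?_⟩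
    show lineFun ↑f ↑g t x = x
    exact lineFun_id_outside _ _ t (f.2.choose_spec.2 x fun hc => hx (Or.inl hc))
      (g.2.choose_spec.2 x fun hc => hx (Or.inr hc))

lemma lineC_apply (f g : HomeoC) (t : ℝ) (x : ℝ) :
    (lineC f g t : HH) x = (1 - proj t) * (f : HH) x + proj t * (g : HH) x := rfl

lemma lineC_zero (f g : HomeoC) : lineC f g 0 = f := by
  apply Subtype.ext; apply Homeomorph.ext; intro x
  rw [lineC_apply, proj_zero]; ring

lemma lineC_one (f g : HomeoC) : lineC f g 1 = g := by
  apply Subtype.ext; apply Homeomorph.ext; intro x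
  rw [lineC_apply, proj_one]; ring

lemma lineC_continuous (f g : HomeoC) : Continuous fun t => lineC f g t := by
  have hjoint : Continuous fun p : ℝ × ℝ => ((lineC f g p.1 : HH)) p.2 := by
    show Continuous fun p : ℝ × ℝ => (1 - proj p.1) * (f:HH) p.2 + proj p.1 * (g:HH) p.2
    have := continuous_proj
    have hf := (f:HH).continuous
    have hg := (g:HH).continuous
    fun_prop
  have hm : ∀ t, StrictMono ⇑((lineC f g t : HH)) := fun t =>
    lineFun_strictMono _ _ (strictMono_of_mem f.2) (strictMono_of_mem g.2) t
  apply Continuous.subtype_mk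
  exact continuous_into (fun t => (lineC f g t : HH)) hjoint
    (continuous_symm_aux _ hjoint hm)

/-- a class of compactly supported homeomorphisms closed under straight lines to `1`
is preconnected. -/
lemma isPreconnected_class (A : Set HomeoC) (h1 : (1:HomeoC) ∈ A)
    (hline : ∀ f ∈ A, ∀ t : ℝ, lineC f 1 t ∈ A) : IsPreconnected A := by
  apply isPreconnected_of_forall (1 : HomeoC)
  intro f hf
  refine ⟨range (lineC f 1), ?_, ⟨1, lineC_one f 1⟩, ⟨0, lineC_zero f 1⟩, ?_⟩
  · rintro x ⟨t, rfl⟩; exact hline f hf t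
  · rw [← image_univ]
    exact isPreconnected_univ.image _ (lineC_continuous f 1).continuousOn

end S6
namespace S6
open Set

@[simp] lemma coe_mul (a b : HomeoC) : ((a * b : HomeoC) : HH) = (a : HH) * b := rfl
@[simp] lemma coe_inv (a : HomeoC) : ((a⁻¹ : HomeoC) : HH) = (a : HH)⁻¹ := rfl
@[simp] lemma coe_one : ((1 : HomeoC) : HH) = 1 := rfl

/-- homeos supported in the right half line -/
def Gplus : Subgroup HomeoC where
  carrier := {f | SuppIn ↑f (Ioi 0)}
  one_mem' := suppIn_one _
  mul_mem' := fun hf hg => suppIn_mul hf hg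
  inv_mem' := fun hf => suppIn_inv hf

/-- homeos supported in the left half line -/
def Gminus : Subgroup HomeoC where
  carrier := {f | SuppIn ↑f (Iio 0)}
  one_mem' := suppIn_one _
  mul_mem' := fun hf hg => suppIn_mul hf hg
  inv_mem' := fun hf => suppIn_inv hf

/-- the stabilizer of `0` -/
def Stab : Subgroup HomeoC where
  carrier := {f | (f : HH) 0 = 0}
  one_mem' := rfl
  mul_mem' := by
    rintro a b (ha : (a:HH) 0 = 0) (hb : (b:HH) 0 = 0)
    show (a:HH) ((b:HH) 0) = 0
    rw [hb, ha]
  inv_mem' := by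
    rintro a (ha : (a:HH) 0 = 0)
    show (a:HH).symm 0 = 0
    exact (a:HH).symm_apply_eq.mpr ha.symm

lemma mem_Gplus {f : HomeoC} : f ∈ Gplus ↔ SuppIn ↑f (Ioi 0) := Iff.rfl
lemma mem_Gminus {f : HomeoC} : f ∈ Gminus ↔ SuppIn ↑f (Iio 0) := Iff.rfl
lemma mem_Stab {f : HomeoC} : f ∈ Stab ↔ (f : HH) 0 = 0 := Iff.rfl

lemma preconn_of_suppIn_class (U : Set ℝ) :
    IsPreconnected {f : HomeoC | SuppIn ↑f U} := by
  apply isPreconnected_class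
  · exact suppIn_one _
  · rintro f ⟨C, h1, h2, h3⟩ t
    refine ⟨C, h1, h2, fun x hx => ?_⟩
    rw [lineC_apply, h3 x hx]
    show (1 - proj t) * x + proj t * x = x
    ring

lemma preconn_Gplus : IsPreconnected (Gplus : Set HomeoC) := preconn_of_suppIn_class _
lemma preconn_Gminus : IsPreconnected (Gminus : Set HomeoC) := preconn_of_suppIn_class _

lemma preconn_Stab : IsPreconnected (Stab : Set HomeoC) := by
  apply isPreconnected_class
  · exact rfl
  · rintro f (hf : (f:HH) 0 = 0) t
    show ((lineC f 1 t : HomeoC) : HH) 0 = 0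
    rw [lineC_apply, hf]
    show (1 - proj t) * 0 + proj t * ((1:HH) 0) = 0
    show (1 - proj t) * 0 + proj t * 0 = 0
    ring

lemma preconn_top : IsPreconnected ((⊤ : Subgroup HomeoC) : Set HomeoC) := by
  apply isPreconnected_class <;> simp

section Psi

variable (ψ : HomeoC →* HH)

lemma cont_orbit (hcont : Continuous ⇑ψ) (p : ℝ) : Continuous fun f : HomeoC => ψ f p :=
  (continuous_eval p).comp hcont

/-- every homeomorphism in the image of ψ is increasing. -/
lemma psi_mono (hcont : Continuous ⇑ψ) (f : HomeoC) : StrictMono ⇑(ψ f) := by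
  set Δ := fun g : HomeoC => ψ g 1 - ψ g 0 with hΔdef
  have hΔ : Continuous Δ := ((cont_orbit ψ hcont 1)).sub ((cont_orbit ψ hcont 0))
  have hne : ∀ g, Δ g ≠ 0 := by
    intro g h
    have : ψ g 1 = ψ g 0 := by simpa [hΔdef, sub_eq_zero] using h
    exact one_ne_zero ((ψ g).injective this)
  have h1 : Δ 1 = 1 := by simp [hΔdef, map_one]
  have hmain : 0 < Δ f := by
    by_contra h
    push_neg at h
    have hs : IsPreconnected (Δ '' range (lineC f 1)) := by
      apply IsPreconnected.image _ _ hΔ.continuousOn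
      rw [← image_univ]
      exact isPreconnected_univ.image _ (lineC_continuous f 1).continuousOn
    have hmemf : Δ f ∈ Δ '' range (lineC f 1) := ⟨f, ⟨0, lineC_zero f 1⟩, rfl⟩
    have hmem1 : Δ 1 ∈ Δ '' range (lineC f 1) := ⟨1, ⟨1, lineC_one f 1⟩, rfl⟩
    have : (0:ℝ) ∈ Δ '' range (lineC f 1) := by
      apply hs.Icc_subset hmemf hmem1
      rw [h1]
      exact ⟨h, zero_le_one⟩
    obtain ⟨g, _, hg⟩ := this
    exact hne g hg
  rcases Continuous.strictMono_of_inj (ψ f).continuous (ψ f).injective with h | h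
  · exact h
  · exfalso
    have := h (show (0:ℝ) < 1 by norm_num)
    simp only [hΔdef] at hmain
    linarith

/-- increasing homeo maps sSup to sSup -/
lemma homeo_map_sSup (φ : HH) (hφ : StrictMono ⇑φ) {O : Set ℝ} (hne : O.Nonempty)
    (hbdd : BddAbove O) : φ (sSup O) = sSup (φ '' O) :=
  Monotone.map_csSup_of_continuousAt φ.continuous.continuousAt hφ.monotone hne hbdd

lemma homeo_map_sInf (φ : HH) (hφ : StrictMono ⇑φ) {O : Set ℝ} (hne : O.Nonempty)
    (hbdd : BddBelow O) : φ (sInf O) = sInf (φ '' O) :=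
  Monotone.map_csInf_of_continuousAt φ.continuous.continuousAt hφ.monotone hne hbdd

/-- image of an orbit under a member of the acting subgroup is the orbit -/
lemma orbit_invariant (A : Subgroup HomeoC) {f : HomeoC} (hf : f ∈ A) (p : ℝ) :
    ψ f '' ((fun g : HomeoC => ψ g p) '' (A : Set HomeoC))
      = (fun g : HomeoC => ψ g p) '' (A : Set HomeoC) := by
  ext z
  constructor
  · rintro ⟨-, ⟨g, hg, rfl⟩, rfl⟩
    refine ⟨f * g, A.mul_mem hf hg, ?_⟩
    show ψ (f * g) p = ψ f (ψ g p)
    rw [map_mul]; rfl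
  · rintro ⟨g, hg, rfl⟩
    refine ⟨ψ (f⁻¹ * g) p, ⟨f⁻¹ * g, A.mul_mem (A.inv_mem hf) hg, rfl⟩, ?_⟩
    show ψ f (ψ (f⁻¹ * g) p) = ψ g p
    rw [← homeo_mul_apply, ← map_mul, ← mul_assoc, mul_inv_cancel, one_mul]

/-- Fundamental dichotomy: a preconnected subgroup either has a common fixed point
downstairs, or acts transitively. -/
lemma orbit_dichotomy (hcont : Continuous ⇑ψ) (A : Subgroup HomeoC) (hA : IsPreconnected (A : Set HomeoC)) :
    (∃ q : ℝ, ∀ f ∈ A, ψ f q = q) ∨ (∀ p z : ℝ, ∃ f ∈ A, ψ f p = z) := by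
  by_cases hfix : ∃ q : ℝ, ∀ f ∈ A, ψ f q = q
  · exact Or.inl hfix
  right
  push_neg at hfix
  intro p z
  set O := (fun g : HomeoC => ψ g p) '' (A : Set HomeoC) with hO
  have hOne : O.Nonempty := ⟨p, 1, A.one_mem, by simp [map_one]⟩
  have hOconn : IsPreconnected O := hA.image _ (cont_orbit ψ hcont p).continuousOn
  have hnb : ¬ BddAbove O := by
    intro hbdd
    obtain ⟨f, hfA, hfne⟩ := hfix (sSup O)
    apply hfne
    rw [homeo_map_sSup (ψ f) (psi_mono ψ hcont f) hOne hbdd,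
      orbit_invariant ψ A hfA p]
  have hnb' : ¬ BddBelow O := by
    intro hbdd
    obtain ⟨f, hfA, hfne⟩ := hfix (sInf O)
    apply hfne
    rw [homeo_map_sInf (ψ f) (psi_mono ψ hcont f) hOne hbdd,
      orbit_invariant ψ A hfA p]
  have hz : z ∈ O := by
    obtain ⟨b, hbO, hzb⟩ := not_bddAbove_iff.mp hnb z
    obtain ⟨a, haO, hza⟩ := not_bddBelow_iff.mp hnb' z
    exact hOconn.Icc_subset haO hbO ⟨hza.le, hzb.le⟩
  obtain ⟨f, hf, hfz⟩ := hz
  exact ⟨f, hf, hfz⟩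

/-- A preconnected subgroup preserving a proper nonempty closed set has a fixed point in it. -/
lemma fixpt_in_closed (hcont : Continuous ⇑ψ) (A : Subgroup HomeoC) (hA : IsPreconnected (A : Set HomeoC))
    (X : Set ℝ) (hne : X.Nonempty) (hXne : X ≠ univ) (hXcl : IsClosed X)
    (hinv : ∀ f ∈ A, ∀ x ∈ X, ψ f x ∈ X) :
    ∃ q ∈ X, ∀ f ∈ A, ψ f q = q := by
  obtain ⟨a, ha⟩ := hne
  set O := (fun g : HomeoC => ψ g a) '' (A : Set HomeoC) with hO
  have hOne : O.Nonempty := ⟨a, 1, A.one_mem, by simp [map_one]⟩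
  have hOX : O ⊆ X := by rintro - ⟨g, hg, rfl⟩; exact hinv g hg a ha
  have hOconn : IsPreconnected O := hA.image _ (cont_orbit ψ hcont a).continuousOn
  have hOneq : O ≠ univ := fun h => hXne (univ_subset_iff.mp (h ▸ hOX))
  have hbdd : BddAbove O ∨ BddBelow O := by
    by_contra h
    push_neg at h
    apply hOneq
    apply eq_univ_of_forall
    intro z
    obtain ⟨b, hbO, hzb⟩ := not_bddAbove_iff.mp h.1 z
    obtain ⟨c, hcO, hzc⟩ := not_bddBelow_iff.mp h.2 z
    exact hOconn.Icc_subset hcO hbO ⟨hzc.le, hzb.le⟩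
  rcases hbdd with hbdd | hbdd
  · refine ⟨sSup O, ?_, fun f hf => ?_⟩
    · exact hXcl.closure_subset_iff.mpr hOX (csSup_mem_closure hOne hbdd)
    · rw [homeo_map_sSup (ψ f) (psi_mono ψ hcont f) hOne hbdd, orbit_invariant ψ A hf a]
  · refine ⟨sInf O, ?_, fun f hf => ?_⟩
    · exact hXcl.closure_subset_iff.mpr hOX (csInf_mem_closure hOne hbdd)
    · rw [homeo_map_sInf (ψ f) (psi_mono ψ hcont f) hOne hbdd, orbit_invariant ψ A hf a]

end Psi
end S6
namespace S6
open Set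

section Holder

variable {Γ : Subgroup HH}

/-- everywhere-positive displacement -/
def Pos (a : HH) : Prop := ∀ x : ℝ, x < a x
/-- everywhere-negative displacement -/
def Neg' (a : HH) : Prop := ∀ x : ℝ, a x < x

variable (hmono : ∀ a ∈ Γ, StrictMono ⇑a)
  (hfree : ∀ a ∈ Γ, a ≠ 1 → ∀ x : ℝ, a x ≠ x)

include hmono hfree

lemma trich {a : HH} (ha : a ∈ Γ) : Pos a ∨ a = 1 ∨ Neg' a := by
  by_cases h1 : a = 1
  · exact Or.inr (Or.inl h1)
  have hd : ∀ x : ℝ, a x - x ≠ 0 := fun x hx =>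
    hfree a ha h1 x (by linarith [sub_eq_zero.mp hx])
  have hcont : Continuous fun x => a x - x := a.continuous.sub continuous_id
  by_cases hp : ∀ x : ℝ, 0 < a x - x
  · exact Or.inl fun x => by linarith [hp x]
  push_neg at hp
  obtain ⟨x0, hx0⟩ := hp
  have hx0' : a x0 - x0 < 0 := lt_of_le_of_ne hx0 (hd x0)
  refine Or.inr (Or.inr fun x => ?_)
  by_contra hx
  push_neg at hx
  have hx' : 0 < a x - x := by
    rcases lt_or_eq_of_le hx with h | h
    · linarith
    · exact absurd h.symm (fun hh => hd x (by linarith))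
  have hconn : IsPreconnected ((fun x => a x - x) '' univ) :=
    isPreconnected_univ.image _ hcont.continuousOn
  have h0 : (0:ℝ) ∈ (fun x => a x - x) '' univ := by
    apply hconn.Icc_subset ⟨x0, mem_univ _, rfl⟩ ⟨x, mem_univ _, rfl⟩
    exact ⟨hx0'.le, hx'.le⟩
  obtain ⟨z, _, hz⟩ := h0
  exact hd z hz

lemma cmp {a b : HH} (ha : a ∈ Γ) (hb : b ∈ Γ) :
    (∀ x : ℝ, a x < b x) ∨ a = b ∨ (∀ x : ℝ, b x < a x) := by
  have hd : a⁻¹ * b ∈ Γ := Γ.mul_mem (Γ.inv_mem ha) hb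
  have hab : a * (a⁻¹ * b) = b := by group
  rcases trich hmono hfree hd with h | h | h
  · refine Or.inl fun x => ?_
    have : b x = a ((a⁻¹ * b) x) := by rw [← homeo_mul_apply, hab]
    rw [this]
    exact hmono a ha (h x)
  · exact Or.inr (Or.inl (by rw [← hab, h, mul_one]))
  · refine Or.inr (Or.inr fun x => ?_)
    have : b x = a ((a⁻¹ * b) x) := by rw [← homeo_mul_apply, hab]
    rw [this]
    exact hmono a ha (h x)

lemma transfer_le {a b : HH} (ha : a ∈ Γ) (hb : b ∈ Γ) {x0 : ℝ} (h : a x0 ≤ b x0) :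
    ∀ x, a x ≤ b x := by
  rcases cmp hmono hfree ha hb with hc | hc | hc
  · exact fun x => (hc x).le
  · exact fun x => hc ▸ le_rfl
  · exact absurd h (not_le.mpr (hc x0))

lemma transfer_lt {a b : HH} (ha : a ∈ Γ) (hb : b ∈ Γ) {x0 : ℝ} (h : a x0 < b x0) :
    ∀ x, a x < b x := by
  rcases cmp hmono hfree ha hb with hc | hc | hc
  · exact hc
  · exact absurd h (by rw [hc]; exact lt_irrefl _)
  · exact absurd h (not_lt.mpr (hc x0).le)

lemma pos_pow {a : HH} (hpos : Pos a) : ∀ n : ℕ, 0 < n → Pos (a ^ n) := by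
  intro n hn
  induction n with
  | zero => omega
  | succ k ih =>
    rcases Nat.eq_zero_or_pos k with hk | hk
    · subst hk; simpa [pow_one] using hpos
    · intro x
      have h1 : x < (a ^ k) x := ih hk x
      have h2 : (a ^ k) x < a ((a ^ k) x) := hpos _
      calc x < (a ^ k) x := h1
        _ < a ((a ^ k) x) := h2
        _ = (a ^ (k+1)) x := by rw [pow_succ']; rfl

lemma pos_inv_neg {a : HH} (hpos : Pos a) : Neg' a⁻¹ := by
  intro x
  have := hpos ((a⁻¹ : HH) x)
  calc (a⁻¹:HH) x < a ((a⁻¹:HH) x) := this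
    _ = x := a.apply_symm_apply x

lemma neg_pow {a : HH} (hneg : Neg' a) : ∀ n : ℕ, 0 < n → Neg' (a ^ n) := by
  intro n hn
  induction n with
  | zero => omega
  | succ k ih =>
    rcases Nat.eq_zero_or_pos k with hk | hk
    · subst hk; simpa [pow_one] using hneg
    · intro x
      have h1 : (a ^ k) x < x := ih hk x
      have h2 : a ((a ^ k) x) < (a ^ k) x := hneg _
      calc (a ^ (k+1)) x = a ((a ^ k) x) := by rw [pow_succ']; rfl
        _ < (a ^ k) x := h2
        _ < x := h1

lemma zpow_eval_strictMono {a : HH} (ha : a ∈ Γ) (hpos : Pos a) :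
    StrictMono fun m : ℤ => (a ^ m) 0 := by
  intro m k hmk
  have key : a ^ k = a ^ m * a ^ (k - m) := by
    rw [← zpow_add]; congr 1; ring
  have hpos' : Pos (a ^ (k - m)) := by
    obtain ⟨j, hj⟩ : ∃ j : ℕ, k - m = ((j + 1 : ℕ) : ℤ) := ⟨(k - m - 1).toNat, by omega⟩
    rw [hj, zpow_natCast]
    exact pos_pow hmono hfree hpos _ (Nat.succ_pos j)
  calc (a ^ m) 0 < (a ^ m) ((a ^ (k - m)) 0) :=
        hmono _ (Γ.zpow_mem ha m) (hpos' 0)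
    _ = (a ^ k) 0 := by rw [key]; rfl

lemma pos_unbounded {a : HH} (ha : a ∈ Γ) (hpos : Pos a) (c : ℝ) :
    ∃ n : ℕ, c < (a ^ n) 0 := by
  by_contra h
  push_neg at h
  set u : ℕ → ℝ := fun n => (a ^ n) 0 with hu
  have humono : Monotone u := by
    apply monotone_nat_of_le_succ
    intro n
    have : u (n+1) = a (u n) := by rw [hu]; show (a^(n+1)) 0 = a ((a^n) 0); rw [pow_succ']; rfl
    rw [this]
    exact (hpos (u n)).le
  have hbdd : BddAbove (range u) := ⟨c, by rintro - ⟨n, rfl⟩; exact h n⟩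
  have hlim : Filter.Tendsto u Filter.atTop (nhds (⨆ n, u n)) :=
    tendsto_atTop_ciSup humono hbdd
  have hlim2 : Filter.Tendsto (fun n => a (u n)) Filter.atTop (nhds (a (⨆ n, u n))) :=
    (a.continuous.tendsto _).comp hlim
  have hshift : (fun n => a (u n)) = fun n => u (n + 1) := by
    funext n
    show a ((a^n) 0) = (a^(n+1)) 0
    rw [pow_succ']; rfl
  have hlim3 : Filter.Tendsto (fun n => u (n + 1)) Filter.atTop (nhds (⨆ n, u n)) :=
    hlim.comp (Filter.tendsto_add_atTop_nat 1)
  rw [hshift] at hlim2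
  have : a (⨆ n, u n) = ⨆ n, u n := tendsto_nhds_unique hlim2 hlim3
  have hane : a ≠ 1 := fun h1 => by have := hpos 0; rw [h1] at this; exact lt_irrefl _ this
  exact hfree a ha hane _ this

lemma neg_unbounded {a : HH} (ha : a ∈ Γ) (hneg : Neg' a) (c : ℝ) :
    ∃ n : ℕ, (a ^ n) 0 < c := by
  by_contra h
  push_neg at h
  set u : ℕ → ℝ := fun n => (a ^ n) 0 with hu
  have humono : Antitone u := by
    apply antitone_nat_of_succ_le
    intro n
    have : u (n+1) = a (u n) := by rw [hu]; show (a^(n+1)) 0 = a ((a^n) 0); rw [pow_succ']; rfl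
    rw [this]
    exact (hneg (u n)).le
  have hbdd : BddBelow (range u) := ⟨c, by rintro - ⟨n, rfl⟩; exact h n⟩
  have hlim : Filter.Tendsto u Filter.atTop (nhds (⨅ n, u n)) :=
    tendsto_atTop_ciInf humono hbdd
  have hlim2 : Filter.Tendsto (fun n => a (u n)) Filter.atTop (nhds (a (⨅ n, u n))) :=
    (a.continuous.tendsto _).comp hlim
  have hshift : (fun n => a (u n)) = fun n => u (n + 1) := by
    funext n
    show a ((a^n) 0) = (a^(n+1)) 0
    rw [pow_succ']; rfl
  have hlim3 : Filter.Tendsto (fun n => u (n + 1)) Filter.atTop (nhds (⨅ n, u n)) :=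
    hlim.comp (Filter.tendsto_add_atTop_nat 1)
  rw [hshift] at hlim2
  have : a (⨅ n, u n) = ⨅ n, u n := tendsto_nhds_unique hlim2 hlim3
  have hane : a ≠ 1 := fun h1 => by have := hneg 0; rw [h1] at this; exact lt_irrefl _ this
  exact hfree a ha hane _ this

/-- archimedean bracketing by powers of a positive element -/
lemma bracket {a g : HH} (ha : a ∈ Γ) (hpos : Pos a) (hg : g ∈ Γ) :
    ∃ m : ℤ, (∀ x, (a ^ m) x ≤ g x) ∧ (∀ x, g x < (a ^ (m+1)) x) := by
  have hSne : ∃ m : ℤ, (a ^ m) 0 ≤ g 0 := by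
    obtain ⟨n, hn⟩ := neg_unbounded hmono hfree (Γ.inv_mem ha) (pos_inv_neg hmono hfree hpos) (g 0)
    refine ⟨-(n:ℤ), ?_⟩
    have : a ^ (-(n:ℤ)) = (a⁻¹) ^ (n:ℕ) := by
      rw [zpow_neg, ← inv_zpow, zpow_natCast]
    rw [this]
    exact hn.le
  have hSbdd : ∃ N : ℤ, ∀ m : ℤ, (a ^ m) 0 ≤ g 0 → m ≤ N := by
    obtain ⟨n, hn⟩ := pos_unbounded hmono hfree ha hpos (g 0)
    refine ⟨(n:ℤ), fun m hm => ?_⟩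
    by_contra hc
    push_neg at hc
    have h2 : (a ^ ((n:ℤ))) 0 < (a ^ m) 0 := zpow_eval_strictMono hmono hfree ha hpos hc
    rw [zpow_natCast] at h2
    linarith
  obtain ⟨N, hN⟩ := hSbdd
  obtain ⟨m, hm1, hm2⟩ := Int.exists_greatest_of_bdd
    (P := fun m => (a ^ m) 0 ≤ g 0) ⟨N, hN⟩ hSne
  refine ⟨m, transfer_le hmono hfree (Γ.zpow_mem ha m) hg hm1, ?_⟩
  have : ¬ ((a ^ (m+1)) 0 ≤ g 0) := fun hc => by linarith [hm2 _ hc]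
  push_neg at this
  exact transfer_lt hmono hfree hg (Γ.zpow_mem ha (m+1)) this

/-- In the non-minimal case, positive elements admit "square roots below". -/
lemma sqrt_below (hnomin : ∀ f ∈ Γ, Pos f → ∃ h ∈ Γ, Pos h ∧ ¬(∀ x, f x ≤ h x))
    {f : HH} (hf : f ∈ Γ) (hfpos : Pos f) :
    ∃ h ∈ Γ, Pos h ∧ ∀ x, (h * h) x ≤ f x := by
  obtain ⟨h', hh', hh'pos, hlt⟩ := hnomin f hf hfpos
  push_neg at hlt
  obtain ⟨x1, hx1⟩ := hlt
  have hh'f : ∀ x, h' x < f x := transfer_lt hmono hfree hh' hf hx1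
  by_cases hsq : ∀ x, (h' * h') x ≤ f x
  · exact ⟨h', hh', hh'pos, hsq⟩
  push_neg at hsq
  obtain ⟨x2, hx2⟩ := hsq
  have hfh2 : ∀ x, f x < (h' * h') x :=
    transfer_lt hmono hfree hf (Γ.mul_mem hh' hh') hx2
  refine ⟨f * h'⁻¹, Γ.mul_mem hf (Γ.inv_mem hh'), ?_, ?_⟩
  · intro x
    set y := (h'⁻¹ : HH) x with hy
    have hxy : h' y = x := h'.apply_symm_apply x
    show x < f ((h'⁻¹:HH) x)
    rw [← hy, ← hxy]
    exact hh'f y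
  · intro x
    show f ((h'⁻¹:HH) (f ((h'⁻¹:HH) x))) ≤ f x
    apply (hmono f hf).monotone
    have key : f ((h'⁻¹:HH) x) ≤ h' x := by
      set y := (h'⁻¹ : HH) x with hy
      have hxy : h' y = x := h'.apply_symm_apply x
      have := (hfh2 y).le
      calc f y ≤ h' (h' y) := this
        _ = h' x := by rw [hxy]
    calc (h'⁻¹:HH) (f ((h'⁻¹:HH) x)) ≤ (h'⁻¹:HH) (h' x) :=
          (hmono _ (Γ.inv_mem hh')).monotone key
      _ = x := h'.symm_apply_apply x

/-- commutators cannot be positive in the non-minimal case -/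
lemma comm_not_pos (hnomin : ∀ f ∈ Γ, Pos f → ∃ h ∈ Γ, Pos h ∧ ¬(∀ x, f x ≤ h x))
    {a b : HH} (ha : a ∈ Γ) (hb : b ∈ Γ) :
    ¬ Pos (a * b * a⁻¹ * b⁻¹) := by
  intro hcpos
  set c := a * b * a⁻¹ * b⁻¹ with hc
  have hcmem : c ∈ Γ := Γ.mul_mem (Γ.mul_mem (Γ.mul_mem ha hb) (Γ.inv_mem ha)) (Γ.inv_mem hb)
  obtain ⟨h, hh, hhpos, hsq⟩ := sqrt_below hmono hfree hnomin hcmem hcpos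
  obtain ⟨m, hm1, hm2⟩ := bracket hmono hfree hh hhpos ha
  obtain ⟨k, hk1, hk2⟩ := bracket hmono hfree hh hhpos hb
  have hupper : ∀ x, (a * b) x < (h ^ (m + k + 2)) x := by
    intro x
    have e1 : a (b x) < (h ^ (m+1)) (b x) := hm2 _
    have e2 : (h ^ (m+1)) (b x) < (h ^ (m+1)) ((h ^ (k+1)) x) :=
      hmono _ (Γ.zpow_mem hh (m+1)) (hk2 x)
    have e3 : (h ^ (m+1)) ((h ^ (k+1)) x) = (h ^ (m + k + 2)) x := by
      rw [show (m + k + 2 : ℤ) = (m+1) + (k+1) by ring, zpow_add h (m+1) (k+1)]; rfl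
    show a (b x) < (h ^ (m + k + 2)) x
    rw [← e3]; exact e1.trans e2
  have hlower : ∀ x, (h ^ (k + m)) x ≤ (b * a) x := by
    intro x
    have e1 : (h ^ k) ((h ^ m) x) ≤ b ((h ^ m) x) := hk1 _
    have e2 : b ((h ^ m) x) ≤ b (a x) := (hmono b hb).monotone (hm1 x)
    have e3 : (h ^ (k + m)) x = (h ^ k) ((h ^ m) x) := by rw [zpow_add]; rfl
    show (h ^ (k + m)) x ≤ b (a x)
    rw [e3]; exact e1.trans e2
  have hfinal : ∀ x, c x < (h * h) x := by
    intro x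
    set y := ((b * a)⁻¹ : HH) x with hy
    have hxy : (b * a) y = x := (b*a : HH).apply_symm_apply x
    have hyx : y ≤ (h ^ (-(k + m))) x := by
      have h1 : (h ^ (k + m)) y ≤ x := by rw [← hxy]; exact hlower y
      have h2 := (hmono _ (Γ.zpow_mem hh (-(k+m)))).monotone h1
      have h3 : (h ^ (-(k+m))) ((h ^ (k+m)) y) = y := by
        rw [← homeo_mul_apply, ← zpow_add, neg_add_cancel, zpow_zero]
        rfl
      rwa [h3] at h2
    have hceq : c x = (a * b) y := by
      have : c = (a * b) * (b * a)⁻¹ := by rw [hc]; group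
      rw [this, homeo_mul_apply, ← hy]
    rw [hceq]
    calc (a * b) y < (h ^ (m + k + 2)) y := hupper y
      _ ≤ (h ^ (m + k + 2)) ((h ^ (-(k + m))) x) :=
          (hmono _ (Γ.zpow_mem hh _)).monotone hyx
      _ = (h ^ (2:ℤ)) x := by
          rw [← homeo_mul_apply, ← zpow_add, show (m + k + 2 + -(k + m) : ℤ) = 2 by ring]
      _ = (h * h) x := by
          rw [show (2:ℤ) = (2:ℕ) by norm_num, zpow_natCast, pow_two]
  have := (hfinal 0).trans_le (hsq 0)
  exact lt_irrefl _ this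

/-- Hölder's theorem: a freely acting group of increasing homeomorphisms is abelian. -/
lemma holder : ∀ a ∈ Γ, ∀ b ∈ Γ, a * b = b * a := by
  intro a ha b hb
  by_cases hmin : ∃ f ∈ Γ, Pos f ∧ ∀ g ∈ Γ, Pos g → ∀ x, f x ≤ g x
  · obtain ⟨f, hf, hfpos, hfmin⟩ := hmin
    have key : ∀ g ∈ Γ, ∃ m : ℤ, g = f ^ m := by
      intro g hg
      obtain ⟨m, hm1, hm2⟩ := bracket hmono hfree hf hfpos hg
      have hd : (f ^ m)⁻¹ * g ∈ Γ := Γ.mul_mem (Γ.inv_mem (Γ.zpow_mem hf m)) hg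
      have heq : (f ^ m) * ((f ^ m)⁻¹ * g) = g := by group
      rcases trich hmono hfree hd with h | h | h
      · exfalso
        have hle : ∀ x, f x ≤ ((f ^ m)⁻¹ * g) x := hfmin _ hd h
        have h1 : (f ^ m) (((f ^ m)⁻¹ * g) 0) = g 0 := by
          rw [← homeo_mul_apply, heq]
        have h2 : (f ^ m) (f 0) = (f ^ (m + 1)) 0 := by
          rw [zpow_add, zpow_one]; rfl
        have h3 : f 0 ≤ ((f ^ m)⁻¹ * g) 0 := hle 0
        have h4 := (hmono _ (Γ.zpow_mem hf m)).monotone h3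
        rw [h1] at h4
        rw [h2] at h4
        exact absurd (hm2 0) (not_lt.mpr h4)
      · exact ⟨m, by rw [← heq, h, mul_one]⟩
      · exfalso
        have h1 : (f ^ m) (((f ^ m)⁻¹ * g) 0) = g 0 := by
          rw [← homeo_mul_apply, heq]
        have h2 : ((f ^ m)⁻¹ * g) 0 < 0 := h 0
        have h3 := hmono _ (Γ.zpow_mem hf m) h2
        rw [h1] at h3
        exact absurd (hm1 0) (not_le.mpr h3)
    obtain ⟨m, rfl⟩ := key a ha
    obtain ⟨k, rfl⟩ := key b hb
    exact ((Commute.refl f).zpow_zpow m k).eq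
  · push_neg at hmin
    have hnomin : ∀ f ∈ Γ, Pos f → ∃ h ∈ Γ, Pos h ∧ ¬(∀ x, f x ≤ h x) := by
      intro f hf hfpos
      obtain ⟨h, hh, hhpos, x, hx⟩ := hmin f hf hfpos
      exact ⟨h, hh, hhpos, fun hall => by linarith [hall x]⟩
    set c := a * b * a⁻¹ * b⁻¹ with hc
    have hcmem : c ∈ Γ := Γ.mul_mem (Γ.mul_mem (Γ.mul_mem ha hb) (Γ.inv_mem ha)) (Γ.inv_mem hb)
    rcases trich hmono hfree hcmem with h | h | h
    · exact absurd h (comm_not_pos hmono hfree hnomin ha hb)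
    · have : a * b = b * a := by
        have := h
        rw [hc] at this
        calc a * b = (a * b * a⁻¹ * b⁻¹) * (b * a) := by group
          _ = 1 * (b * a) := by rw [this]
          _ = b * a := one_mul _
      exact this
    · exfalso
      have hcinv : Pos c⁻¹ := by
        intro x
        have h2 := h ((c⁻¹ : HH) x)
        have h3 : c ((c⁻¹:HH) x) = x := c.apply_symm_apply x
        rw [h3] at h2
        exact h2
      have hceq : c⁻¹ = b * a * b⁻¹ * a⁻¹ := by rw [hc]; group
      rw [hceq] at hcinv
      exact comm_not_pos hmono hfree hnomin hb ha hcinv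
end Holder
end S6
namespace S6
open Set

section Swindle

lemma two_zpow_pos (m : ℤ) : (0:ℝ) < 2 ^ m := zpow_pos (by norm_num) m
lemma two_zpow_mono {m n : ℤ} (h : m ≤ n) : (2:ℝ)^m ≤ 2^n :=
  zpow_le_zpow_right₀ (by norm_num) h
lemma two_zpow_strict {m n : ℤ} (h : m < n) : (2:ℝ)^m < 2^n :=
  zpow_lt_zpow_right₀ (by norm_num) h
lemma two_zpow_succ (m : ℤ) : (2:ℝ)^(m+1) = 2^m * 2 := by
  rw [zpow_add₀ (by norm_num : (2:ℝ) ≠ 0), zpow_one]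

lemma log2_le {x : ℝ} (hx : 0 < x) : (2:ℝ)^(Int.log 2 x) ≤ x := by
  have h := Int.zpow_log_le_self (b := 2) (R := ℝ) (by norm_num) hx
  rwa [Nat.cast_ofNat] at h

lemma log2_lt {x : ℝ} : x < (2:ℝ)^(Int.log 2 x + 1) := by
  have h := Int.lt_zpow_succ_log_self (b := 2) (R := ℝ) (by norm_num) x
  rwa [Nat.cast_ofNat] at h

lemma log2_unique {m : ℤ} {x : ℝ} (h0 : 0 < x) (h1 : (2:ℝ)^m ≤ x) (h2 : x < (2:ℝ)^(m+1)) :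
    Int.log 2 x = m := by
  have ha : m ≤ Int.log 2 x :=
    (Int.zpow_le_iff_le_log (by norm_num) h0).mp (by rwa [Nat.cast_ofNat])
  have hb : Int.log 2 x < m + 1 :=
    (Int.lt_zpow_iff_log_lt (by norm_num) h0).mp (by rwa [Nat.cast_ofNat])
  omega

lemma log2_neg {x : ℝ} (h0 : 0 < x) (h1 : x < 1) : Int.log 2 x + 1 ≤ 0 := by
  have : Int.log 2 x < 0 :=
    (Int.lt_zpow_iff_log_lt (by norm_num) h0).mp
      (by rw [Nat.cast_ofNat]; simpa using h1)
  omega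

lemma sw_scaled {x : ℝ} (hx0 : 0 < x) (hx1 : x < 1) :
    1/2 ≤ x / 2^(Int.log 2 x + 1) ∧ x / 2^(Int.log 2 x + 1) < 1 := by
  set m := Int.log 2 x with hm
  have h2p := two_zpow_pos (m+1)
  constructor
  · rw [le_div_iff₀ h2p, two_zpow_succ]
    calc (1/2 : ℝ) * (2^m * 2) = 2^m := by ring
      _ ≤ x := log2_le hx0
  · rw [div_lt_one h2p]
    exact log2_lt


/-- the infinite-swindle function -/
def swFun (f : HH) (x : ℝ) : ℝ :=
  if 0 < x ∧ x < 1 then (2:ℝ)^(Int.log 2 x + 1) * f (x / 2^(Int.log 2 x + 1)) else x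

lemma swFun_pos {f : HH} {x : ℝ} (h : 0 < x ∧ x < 1) :
    swFun f x = (2:ℝ)^(Int.log 2 x + 1) * f (x / 2^(Int.log 2 x + 1)) := by
  rw [swFun, if_pos h]

lemma swFun_neg {f : HH} {x : ℝ} (h : ¬(0 < x ∧ x < 1)) : swFun f x = x := by
  rw [swFun, if_neg h]

variable {f : HH} {K : Set ℝ} (hK : IsCompact K) (hKsub : K ⊆ Ioo (1/2 : ℝ) 1)
  (hf : ∀ x ∉ K, f x = x)

include hK hKsub hf

lemma f_id_out : ∀ x, x ∉ Ioo (1/2:ℝ) 1 → f x = x := fun x hx => hf x (fun hc => hx (hKsub hc))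

lemma f_mono : StrictMono ⇑f := strictMono_of_mem ⟨K, hK, hf⟩

lemma f_block : ∀ y : ℝ, 1/2 ≤ y → y < 1 → 1/2 ≤ f y ∧ f y < 1 := by
  intro y hy1 hy2
  have h12 : f (1/2 : ℝ) = 1/2 := f_id_out hK hKsub hf _ (by norm_num)
  have h1 : f (1:ℝ) = 1 := f_id_out hK hKsub hf _ (by norm_num)
  constructor
  · calc (1/2 : ℝ) = f (1/2) := h12.symm
      _ ≤ f y := (f_mono hK hKsub hf).monotone hy1
  · calc f y < f 1 := f_mono hK hKsub hf hy2
      _ = 1 := h1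

lemma sw_block {x : ℝ} (hx0 : 0 < x) (hx1 : x < 1) :
    (2:ℝ)^(Int.log 2 x) ≤ swFun f x ∧ swFun f x < (2:ℝ)^(Int.log 2 x + 1) := by
  set m := Int.log 2 x with hm
  obtain ⟨hy1, hy2⟩ := sw_scaled hx0 hx1
  obtain ⟨hf1, hf2⟩ := f_block hK hKsub hf _ hy1 hy2
  have h2p := two_zpow_pos (m+1)
  have hsw : swFun f x = (2:ℝ)^(m+1) * f (x / 2^(m+1)) := by
    rw [swFun, if_pos ⟨hx0, hx1⟩]
  rw [hsw]
  constructor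
  · calc (2:ℝ)^m = 2^(m+1) * (1/2) := by rw [two_zpow_succ]; ring
      _ ≤ 2^(m+1) * f (x / 2^(m+1)) := mul_le_mul_of_nonneg_left hf1 h2p.le
  · calc (2:ℝ)^(m+1) * f (x / 2^(m+1)) < 2^(m+1) * 1 := mul_lt_mul_of_pos_left hf2 h2p
      _ = 2^(m+1) := mul_one _

lemma sw_pos_lt {x : ℝ} (hx0 : 0 < x) (hx1 : x < 1) :
    0 < swFun f x ∧ swFun f x < 1 := by
  obtain ⟨h1, h2⟩ := sw_block hK hKsub hf hx0 hx1
  constructor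
  · exact lt_of_lt_of_le (two_zpow_pos _) h1
  · calc swFun f x < 2^(Int.log 2 x + 1) := h2
      _ ≤ (2:ℝ)^(0:ℤ) := two_zpow_mono (log2_neg hx0 hx1)
      _ = 1 := zpow_zero 2

lemma sw_mono : StrictMono (swFun f) := by
  intro a b hab
  by_cases ha : 0 < a ∧ a < 1
  · by_cases hb : 0 < b ∧ b < 1
    · have hma : Int.log 2 a ≤ Int.log 2 b := Int.log_mono_right ha.1 hab.le
      rcases eq_or_lt_of_le hma with he | hlt
      · -- same block
        have hswa : swFun f a = (2:ℝ)^(Int.log 2 a + 1) * f (a / 2^(Int.log 2 a + 1)) := by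
          rw [swFun, if_pos ha]
        have hswb : swFun f b = (2:ℝ)^(Int.log 2 b + 1) * f (b / 2^(Int.log 2 b + 1)) := by
          rw [swFun, if_pos hb]
        rw [hswa, hswb, ← he]
        have h2p := two_zpow_pos (Int.log 2 a + 1)
        apply mul_lt_mul_of_pos_left _ h2p
        apply f_mono hK hKsub hf
        gcongr
      · calc swFun f a < 2^(Int.log 2 a + 1) := (sw_block hK hKsub hf ha.1 ha.2).2
          _ ≤ 2^(Int.log 2 b) := two_zpow_mono (by omega)
          _ ≤ swFun f b := (sw_block hK hKsub hf hb.1 hb.2).1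
    · -- b outside : since a < b and a > 0, b ≥ 1
      have hb1 : 1 ≤ b := by
        rcases not_and_or.mp hb with h | h
        · push_neg at h; linarith [ha.1]
        · push_neg at h; exact h
      have hswb : swFun f b = b := by rw [swFun, if_neg hb]
      rw [hswb]
      calc swFun f a < 1 := (sw_pos_lt hK hKsub hf ha.1 ha.2).2
        _ ≤ b := hb1
  · by_cases hb : 0 < b ∧ b < 1
    · have ha0 : a ≤ 0 := by
        rcases not_and_or.mp ha with h | h
        · push_neg at h; exact h
        · push_neg at h; linarith [hb.2]
      have hswa : swFun f a = a := by rw [swFun, if_neg ha]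
      rw [hswa]
      calc a ≤ 0 := ha0
        _ < swFun f b := (sw_pos_lt hK hKsub hf hb.1 hb.2).1
    · have hswa : swFun f a = a := by rw [swFun, if_neg ha]
      have hswb : swFun f b = b := by rw [swFun, if_neg hb]
      rw [hswa, hswb]; exact hab

lemma sw_surj : Function.Surjective (swFun f) := by
  intro y
  by_cases hy : 0 < y ∧ y < 1
  · set m := Int.log 2 y with hm
    have h2p := two_zpow_pos (m+1)
    set y' := y / 2^(m+1) with hy'
    obtain ⟨hy1, hy2⟩ := sw_scaled hy.1 hy.2
    set w := f.symm y' with hw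
    have hfw : f w = y' := f.apply_symm_apply y'
    have hw12 : 1/2 ≤ w ∧ w < 1 := by
      constructor
      · by_contra hc
        push_neg at hc
        have : f w = w := f_id_out hK hKsub hf w (fun hcc => by
          obtain ⟨u1, _⟩ := hcc; linarith)
        rw [hfw] at this; linarith
      · by_contra hc
        push_neg at hc
        have : f w = w := f_id_out hK hKsub hf w (fun hcc => by
          obtain ⟨_, u2⟩ := hcc; linarith)
        rw [hfw] at this; linarith
    set x := 2^(m+1) * w with hx
    have hxb : (2:ℝ)^m ≤ x ∧ x < 2^(m+1) := by
      constructor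
      · calc (2:ℝ)^m = 2^(m+1) * (1/2) := by rw [two_zpow_succ]; ring
          _ ≤ 2^(m+1) * w := mul_le_mul_of_nonneg_left hw12.1 h2p.le
      · calc (2:ℝ)^(m+1) * w < 2^(m+1) * 1 := mul_lt_mul_of_pos_left hw12.2 h2p
          _ = 2^(m+1) := mul_one _
    have hx0 : 0 < x := lt_of_lt_of_le (two_zpow_pos m) hxb.1
    have hx1 : x < 1 := by
      calc x < 2^(m+1) := hxb.2
        _ ≤ (2:ℝ)^(0:ℤ) := two_zpow_mono (log2_neg hy.1 hy.2)
        _ = 1 := zpow_zero 2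
    have hlog : Int.log 2 x = m := log2_unique hx0 hxb.1 hxb.2
    refine ⟨x, ?_⟩
    rw [swFun, if_pos ⟨hx0, hx1⟩, hlog]
    have : x / 2^(m+1) = w := by rw [hx]; field_simp
    rw [this, hfw, hy']
    field_simp
  · exact ⟨y, by rw [swFun, if_neg hy]⟩

/-- the swindle homeomorphism -/
def swH : HH := mk (swFun f) (sw_mono hK hKsub hf) (sw_surj hK hKsub hf)

lemma swH_suppIn : SuppIn (swH hK hKsub hf) (Icc 0 1) := by
  refine ⟨Icc 0 1, isCompact_Icc, subset_rfl, fun x hx => ?_⟩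
  show swFun f x = x
  rw [swFun, if_neg]
  intro ⟨h1, h2⟩
  exact hx ⟨h1.le, h2.le⟩

end Swindle
end S6
namespace S6
open Set

section Swindle2

/-- the halving map: identity outside `[0,2]`, `x/2` on `[0,1]`. -/
def swg : HH := phiH (show (0:ℝ) < 1 by norm_num) (show (1:ℝ) < 2 by norm_num)
  (show (0:ℝ) < 1/2 by norm_num) (show (1/2:ℝ) < 2 by norm_num)

lemma gA_val (x : ℝ) : phiA 0 1 (1/2 : ℝ) x = x / 2 := by unfold phiA; field_simp; ring
lemma gB_val (x : ℝ) : phiB 2 1 (1/2 : ℝ) x = (3*x - 2) / 2 := by unfold phiB; field_simp; ring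

lemma gval_mid {x : ℝ} (h0 : 0 ≤ x) (h1 : x ≤ 1) : phiFun 0 2 1 (1/2 : ℝ) x = x / 2 := by
  unfold phiFun med
  rw [gA_val, gB_val]
  rw [min_eq_right (show (3*x-2)/2 ≤ x/2 by linarith),
    max_eq_left (show (3*x-2)/2 ≤ x/2 by linarith),
    min_eq_left (show x/2 ≤ x by linarith),
    max_eq_right (show (3*x-2)/2 ≤ x/2 by linarith)]

lemma gval_right {x : ℝ} (h0 : 1 ≤ x) (h1 : x ≤ 2) :
    phiFun 0 2 1 (1/2 : ℝ) x = (3*x - 2) / 2 := by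
  unfold phiFun med
  rw [gA_val, gB_val]
  rw [min_eq_left (show x/2 ≤ (3*x-2)/2 by linarith),
    max_eq_right (show x/2 ≤ (3*x-2)/2 by linarith),
    min_eq_left (show (3*x-2)/2 ≤ x by linarith),
    max_eq_right (show x/2 ≤ (3*x-2)/2 by linarith)]

lemma swg_apply (x : ℝ) : swg x = phiFun 0 2 1 (1/2 : ℝ) x := rfl

variable {f : HH} {K : Set ℝ} (hK : IsCompact K) (hKsub : K ⊆ Ioo (1/2 : ℝ) 1)
  (hf : ∀ x ∉ K, f x = x)

include hK hKsub hf

/-- the key functional equation `F ∘ g = f ∘ g ∘ F`. -/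
lemma sw_conj : ∀ x : ℝ,
    swFun f (phiFun 0 2 1 (1/2 : ℝ) x) = f (phiFun 0 2 1 (1/2 : ℝ) (swFun f x)) := by
  intro x
  set G := phiFun 0 2 1 (1/2 : ℝ) with hG
  rcases le_or_gt x 0 with hx | hx
  · -- x ≤ 0
    have h1 : G x = x := phiFun_id_left (by norm_num) (by norm_num) hx
    have h2 : swFun f x = x := swFun_neg (by rintro ⟨a, -⟩; linarith)
    have h3 : f x = x := f_id_out hK hKsub hf x (by rintro ⟨a, -⟩; linarith)
    rw [h1, h2, h1, h3]
  rcases le_or_gt 2 x with hx2 | hx2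
  · -- x ≥ 2
    have h1 : G x = x := phiFun_id_right (by norm_num) (by norm_num) hx2
    have h2 : swFun f x = x := swFun_neg (by rintro ⟨-, b⟩; linarith)
    have h3 : f x = x := f_id_out hK hKsub hf x (by rintro ⟨-, b⟩; linarith)
    rw [h1, h2, h1, h3]
  rcases le_or_gt 1 x with hx1 | hx1
  · -- 1 ≤ x < 2
    have h2 : swFun f x = x := swFun_neg (by rintro ⟨-, b⟩; linarith)
    have h1 : G x = (3*x - 2)/2 := gval_right hx1 hx2.le
    rw [h2, h1]
    have hGlb : (1/2 : ℝ) ≤ (3*x-2)/2 := by linarith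
    rcases le_or_gt 1 ((3*x-2)/2) with hg1 | hg1
    · have ha : swFun f ((3*x-2)/2) = (3*x-2)/2 := swFun_neg (by rintro ⟨-, b⟩; linarith)
      have hb : f ((3*x-2)/2) = (3*x-2)/2 :=
        f_id_out hK hKsub hf _ (by rintro ⟨-, b⟩; linarith)
      rw [ha, hb]
    · have hg0 : 0 < (3*x-2)/2 := by linarith
      have hlog : Int.log 2 ((3*x-2)/2) = -1 := by
        apply log2_unique hg0
        · rw [show (2:ℝ)^(-1:ℤ) = 1/2 by norm_num]; exact hGlb
        · rw [show (-1 + 1 : ℤ) = 0 by ring, zpow_zero]; exact hg1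
      rw [swFun_pos ⟨hg0, hg1⟩, hlog]
      rw [show (-1 + 1 : ℤ) = 0 by ring, zpow_zero]
      norm_num
  · -- 0 < x < 1
    set m := Int.log 2 x with hm
    have hm0 : m + 1 ≤ 0 := log2_neg hx hx1
    have hxl : (2:ℝ)^m ≤ x := log2_le hx
    have hxu : x < (2:ℝ)^(m+1) := log2_lt
    have h2pm := two_zpow_pos m
    have h2pm1 := two_zpow_pos (m+1)
    have hGx : G x = x/2 := gval_mid hx.le hx1.le
    obtain ⟨hz1, hz2⟩ := sw_block hK hKsub hf hx hx1
    obtain ⟨hz0, hzlt⟩ := sw_pos_lt hK hKsub hf hx hx1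
    rw [← hm] at hz1 hz2
    have hzval : swFun f x = 2^(m+1) * f (x / 2^(m+1)) := by
      rw [swFun_pos ⟨hx, hx1⟩, ← hm]
    have hGz : G (swFun f x) = (swFun f x)/2 := gval_mid hz0.le hzlt.le
    have hx2pos : 0 < x/2 := by linarith
    have hx2lt : x/2 < 1 := by linarith
    have hloghalf : Int.log 2 (x/2) = m - 1 := by
      apply log2_unique hx2pos
      · rw [show (2:ℝ)^(m-1) = 2^m / 2 by
          rw [show m - 1 = m + (-1) by ring, zpow_add₀ (by norm_num : (2:ℝ) ≠ 0),
            show (2:ℝ)^(-1:ℤ) = 1/2 by norm_num]; ring]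
        linarith
      · rw [show (m - 1 + 1 : ℤ) = m by ring]
        have h9 : x / 2 < 2^(m+1)/2 := by linarith
        calc x/2 < 2^(m+1)/2 := h9
          _ = 2^m := by rw [two_zpow_succ]; ring
    have hLHS : swFun f (x/2) = 2^m * f (x / 2^(m+1)) := by
      rw [swFun_pos ⟨hx2pos, hx2lt⟩, hloghalf, show (m - 1 + 1 : ℤ) = m by ring]
      congr 2
      rw [div_div, two_zpow_succ]
      ring_nf
    have hzhalf : f ((swFun f x)/2) = (swFun f x)/2 := by
      apply f_id_out hK hKsub hf
      rintro ⟨a, -⟩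
      linarith
    rw [hGx, hLHS, hGz, hzhalf, hzval, two_zpow_succ]
    ring

/-- every homeomorphism compactly supported in `(1/2,1)` is a commutator of
homeomorphisms supported in `[0,1]`, `[0,2]`. -/
lemma sw0 : ∃ F g : HH, SuppIn F (Icc 0 1) ∧ SuppIn g (Icc 0 2) ∧ f = F * g * F⁻¹ * g⁻¹ := by
  refine ⟨swH hK hKsub hf, swg, swH_suppIn hK hKsub hf, phiH_suppIn _ _ _ _, ?_⟩
  set F := swH hK hKsub hf with hF
  set g := swg with hg
  have key : F * g = f * (g * F) := by
    apply Homeomorph.ext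
    intro x
    show F (g x) = f (g (F x))
    have h1 : F (g x) = swFun f (phiFun 0 2 1 (1/2:ℝ) x) := rfl
    have h2 : g (F x) = phiFun 0 2 1 (1/2:ℝ) (swFun f x) := rfl
    rw [h1, h2]
    exact sw_conj hK hKsub hf x
  have h3 : f = (F * g) * (g * F)⁻¹ := by
    rw [key]; group
  rw [h3]; group

end Swindle2

/-- affine homeomorphism -/
def affH (a b : ℝ) (ha : 0 < a) : HH :=
  mk (fun x => a*x + b)
    (fun u v huv => by dsimp only; nlinarith)
    (fun y => ⟨(y - b)/a, by field_simp; ring⟩)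

lemma affH_apply (a b : ℝ) (ha : 0 < a) (x : ℝ) : affH a b ha x = a*x + b := rfl

/-- every compactly supported homeomorphism of `(0,∞)` is a commutator of two
such homeomorphisms. -/
lemma sw1 {f₀ : HH} (h : SuppIn f₀ (Ioi 0)) :
    ∃ u v : HH, SuppIn u (Ioi 0) ∧ SuppIn v (Ioi 0) ∧ f₀ = u * v * u⁻¹ * v⁻¹ := by
  obtain ⟨C, hC, hCsub, hCid⟩ := h
  rcases C.eq_empty_or_nonempty with hE | hNE
  · have : f₀ = 1 := Homeomorph.ext fun x => hCid x (by simp [hE])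
    exact ⟨1, 1, suppIn_one _, suppIn_one _, by rw [this]; group⟩
  set δ := min (sInf C) (1/2 : ℝ) with hδ
  have hsInfC : sInf C ∈ C := hC.sInf_mem hNE
  have hδpos : 0 < δ := lt_min (hCsub hsInfC) (by norm_num)
  have hδhalf : δ ≤ 1/2 := min_le_right _ _
  set M := max (sSup C) 3 with hM
  have hM3 : (3:ℝ) ≤ M := le_max_right _ _
  have hCIcc : C ⊆ Icc δ M := fun x hx => ⟨(min_le_left _ _).trans (csInf_le hC.bddBelow hx),
    (le_csSup hC.bddAbove hx).trans (le_max_left _ _)⟩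
  set P := phiH (show 7*δ/16 < δ/2 by linarith) (show δ/2 < M + 2 by linarith)
    (show 7*δ/16 < M + 1 by linarith) (show M + 1 < M + 2 by linarith) with hP
  set A := affH (δ/4) (δ/4) (by linarith) with hA
  set k := P * A with hk
  have hkmono : StrictMono ⇑k := fun u v huv => by
    show P (A u) < P (A v)
    exact phiH_mono _ _ _ _ (affH _ _ _ |>.injective.ne huv.ne |>.lt_or_gt.resolve_right
      (not_lt.mpr (by
        show A u ≤ A v
        have : (δ/4)*u + δ/4 ≤ (δ/4)*v + δ/4 := by nlinarith
        exact this)))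
  have hk0 : k 0 = δ/4 := by
    show P (A 0) = δ/4
    have h1 : A 0 = δ/4 := by rw [hA, affH_apply]; ring
    rw [h1]
    exact phiFun_id_left (by linarith) (by linarith) (by linarith)
  have hkhalf : k (1/2 : ℝ) = 3*δ/8 := by
    show P (A (1/2:ℝ)) = 3*δ/8
    have h1 : A (1/2:ℝ) = 3*δ/8 := by rw [hA, affH_apply]; ring
    rw [h1]
    exact phiFun_id_left (by linarith) (by linarith) (by linarith)
  have hk1 : k 1 = M + 1 := by
    show P (A 1) = M + 1
    have h1 : A 1 = δ/2 := by rw [hA, affH_apply]; ring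
    rw [h1]
    exact phiH_u _ _ _ _
  -- conjugated element
  set f := k⁻¹ * f₀ * k with hfdef
  have hsupp : SuppIn f ((⇑(k⁻¹ : HH)) '' Icc δ M) := by
    have := suppIn_conj (k⁻¹) (⟨C, hC, hCIcc, hCid⟩ : SuppIn f₀ (Icc δ M))
    rwa [inv_inv] at this
  have himg : (⇑(k⁻¹ : HH)) '' Icc δ M ⊆ Ioo (1/2 : ℝ) 1 := by
    rintro - ⟨y, hy, rfl⟩
    have hy1 : k (1/2 : ℝ) < y := by rw [hkhalf]; linarith [hy.1]
    have hy2 : y < k 1 := by rw [hk1]; linarith [hy.2]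
    constructor
    · have : k (1/2 : ℝ) < k (k.symm y) := by rwa [k.apply_symm_apply]
      exact hkmono.lt_iff_lt.mp this
    · have : k (k.symm y) < k 1 := by rwa [k.apply_symm_apply]
      exact hkmono.lt_iff_lt.mp this
  obtain ⟨C', hC', hC'sub, hC'id⟩ := hsupp
  have hC'Ioo : C' ⊆ Ioo (1/2 : ℝ) 1 := hC'sub.trans himg
  obtain ⟨F, g, hFsupp, hgsupp, hcomm⟩ := sw0 hC' hC'Ioo hC'id
  refine ⟨k * F * k⁻¹, k * g * k⁻¹, ?_, ?_, ?_⟩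
  · apply suppIn_mono _ (suppIn_conj k hFsupp)
    rintro - ⟨y, hy, rfl⟩
    show 0 < k y
    calc (0:ℝ) < δ/4 := by linarith
      _ = k 0 := hk0.symm
      _ ≤ k y := hkmono.monotone hy.1
  · apply suppIn_mono _ (suppIn_conj k hgsupp)
    rintro - ⟨y, hy, rfl⟩
    show 0 < k y
    calc (0:ℝ) < δ/4 := by linarith
      _ = k 0 := hk0.symm
      _ ≤ k y := hkmono.monotone hy.1
  · have h1 : f₀ = k * f * k⁻¹ := by rw [hfdef]; group
    rw [h1, hcomm]; group

/-- mirror version : homeomorphisms supported in `(-∞,0)`. -/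
lemma sw2 {f₀ : HH} (h : SuppIn f₀ (Iio 0)) :
    ∃ u v : HH, SuppIn u (Iio 0) ∧ SuppIn v (Iio 0) ∧ f₀ = u * v * u⁻¹ * v⁻¹ := by
  set ν : HH := Homeomorph.neg ℝ with hν
  have hνapp : ∀ x : ℝ, ν x = -x := fun x => rfl
  have hνν : ν * ν = 1 := Homeomorph.ext fun x => by
    show ν (ν x) = x
    rw [hνapp, hνapp, neg_neg]
  have hνinv : ν⁻¹ = ν := by
    rw [← mul_one ν⁻¹, ← hνν, ← mul_assoc, inv_mul_cancel, one_mul]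
  have himg1 : (⇑ν) '' Iio 0 = Ioi (0:ℝ) := by
    ext y
    constructor
    · rintro ⟨x, hx, rfl⟩
      rw [hνapp]
      simpa using hx
    · intro hy
      exact ⟨-y, by simpa using hy, by rw [hνapp, neg_neg]⟩
  have himg2 : (⇑ν) '' Ioi 0 = Iio (0:ℝ) := by
    ext y
    constructor
    · rintro ⟨x, hx, rfl⟩
      rw [hνapp]
      simpa using hx
    · intro hy
      exact ⟨-y, by simpa using hy, by rw [hνapp, neg_neg]⟩
  have hf1 : SuppIn (ν * f₀ * ν⁻¹) (Ioi 0) := by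
    rw [← himg1]
    exact suppIn_conj ν h
  obtain ⟨u, v, hu, hv, hcomm⟩ := sw1 hf1
  have himg3 : (⇑(ν⁻¹ : HH)) '' Ioi 0 = Iio (0:ℝ) := by rw [hνinv]; exact himg2
  refine ⟨ν⁻¹ * u * ν, ν⁻¹ * v * ν, ?_, ?_, ?_⟩
  · have h4 := suppIn_conj (ν⁻¹) hu
    rw [inv_inv, himg3] at h4
    exact h4
  · have h4 := suppIn_conj (ν⁻¹) hv
    rw [inv_inv, himg3] at h4
    exact h4
  · have h1 : f₀ = ν⁻¹ * (ν * f₀ * ν⁻¹) * ν := by group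
    rw [h1, hcomm]
    group

end S6
namespace S6
open Set

lemma disjoint_halflines : Disjoint (Ioi (0:ℝ)) (Iio (0:ℝ)) := by
  rw [Set.disjoint_left]
  intro x hx hx'
  exact lt_asymm (show (0:ℝ) < x from hx) (show x < 0 from hx')

lemma comm_Gplus_Gminus {a b : HomeoC} (ha : a ∈ Gplus) (hb : b ∈ Gminus) :
    a * b = b * a := by
  apply Subtype.ext
  exact commute_of_disjoint ha hb disjoint_halflines

section Psi2

variable (ψ : HomeoC →* HH)

/-- if ψ kills all of `Gplus` it is trivial -/
lemma kill_Gplus (hkill : ∀ b ∈ Gplus, ψ b = 1) : ∀ f : HomeoC, ψ f = 1 := by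
  intro f
  obtain ⟨C, hC, hCid⟩ := f.2
  obtain ⟨M, hM0, hMs⟩ := compact_bound hC
  set k : HH := phiH (show -M-1 < -M by linarith) (show -M < M+2 by linarith)
    (show -M-1 < 1 by linarith) (show (1:ℝ) < M+2 by linarith) with hkdef
  have hksupp : SuppIn k (Icc (-M-1) (M+2)) := phiH_suppIn _ _ _ _
  set kc : HomeoC := ⟨k, mem_homeoC hksupp⟩ with hkc
  have hkM : k (-M) = 1 := phiH_u _ _ _ _
  have hfsupp : SuppIn (f : HH) (Icc (-M) M) := ⟨C, hC, hMs, hCid⟩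
  have hconj : SuppIn ((kc * f * kc⁻¹ : HomeoC) : HH) (⇑k '' Icc (-M) M) :=
    suppIn_conj k hfsupp
  have himg : ⇑k '' Icc (-M) M ⊆ Ioi 0 := by
    rintro - ⟨y, hy, rfl⟩
    show (0:ℝ) < k y
    calc (0:ℝ) < 1 := one_pos
      _ = k (-M) := hkM.symm
      _ ≤ k y := (phiH_mono _ _ _ _).monotone hy.1
  have hmem : (kc * f * kc⁻¹ : HomeoC) ∈ Gplus := suppIn_mono himg hconj
  have h1 : ψ (kc * f * kc⁻¹) = 1 := hkill _ hmem
  have h2 : f = kc⁻¹ * (kc * f * kc⁻¹) * kc := by group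
  rw [h2, map_mul, map_mul, h1, map_inv]
  group

/-- if ψ kills all of `Gminus` it is trivial -/
lemma kill_Gminus (hkill : ∀ b ∈ Gminus, ψ b = 1) : ∀ f : HomeoC, ψ f = 1 := by
  intro f
  obtain ⟨C, hC, hCid⟩ := f.2
  obtain ⟨M, hM0, hMs⟩ := compact_bound hC
  set k : HH := phiH (show -M-2 < M by linarith) (show M < M+1 by linarith)
    (show -M-2 < -1 by linarith) (show (-1:ℝ) < M+1 by linarith) with hkdef
  have hksupp : SuppIn k (Icc (-M-2) (M+1)) := phiH_suppIn _ _ _ _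
  set kc : HomeoC := ⟨k, mem_homeoC hksupp⟩ with hkc
  have hkM : k M = -1 := phiH_u _ _ _ _
  have hfsupp : SuppIn (f : HH) (Icc (-M) M) := ⟨C, hC, hMs, hCid⟩
  have hconj : SuppIn ((kc * f * kc⁻¹ : HomeoC) : HH) (⇑k '' Icc (-M) M) :=
    suppIn_conj k hfsupp
  have himg : ⇑k '' Icc (-M) M ⊆ Iio 0 := by
    rintro - ⟨y, hy, rfl⟩
    show k y < 0
    calc k y ≤ k M := (phiH_mono _ _ _ _).monotone hy.2
      _ = -1 := hkM
      _ < 0 := by norm_num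
  have hmem : (kc * f * kc⁻¹ : HomeoC) ∈ Gminus := suppIn_mono himg hconj
  have h1 : ψ (kc * f * kc⁻¹) = 1 := hkill _ hmem
  have h2 : f = kc⁻¹ * (kc * f * kc⁻¹) * kc := by group
  rw [h2, map_mul, map_mul, h1, map_inv]
  group

lemma perf_Gplus : ∀ b ∈ Gplus, ∃ u ∈ Gplus, ∃ v ∈ Gplus, b = u * v * u⁻¹ * v⁻¹ := by
  intro b hb
  obtain ⟨u, v, hu, hv, he⟩ := sw1 hb
  refine ⟨⟨u, mem_homeoC hu⟩, hu, ⟨v, mem_homeoC hv⟩, hv, ?_⟩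
  apply Subtype.ext
  exact he

lemma perf_Gminus : ∀ b ∈ Gminus, ∃ u ∈ Gminus, ∃ v ∈ Gminus, b = u * v * u⁻¹ * v⁻¹ := by
  intro b hb
  obtain ⟨u, v, hu, hv, he⟩ := sw2 hb
  refine ⟨⟨u, mem_homeoC hu⟩, hu, ⟨v, mem_homeoC hv⟩, hv, ?_⟩
  apply Subtype.ext
  exact he

/-- Step B : a transitive action of one half-line group forces triviality of the other. -/
lemma stepB (hcont : Continuous ⇑ψ) (A B : Subgroup HomeoC)
    (hAconn : IsPreconnected (A : Set HomeoC))
    (hcomm : ∀ a ∈ A, ∀ b ∈ B, a * b = b * a)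
    (hBperf : ∀ b ∈ B, ∃ u ∈ B, ∃ v ∈ B, b = u * v * u⁻¹ * v⁻¹)
    (hBkill : (∀ b ∈ B, ψ b = 1) → False) :
    ∃ q : ℝ, ∀ a ∈ A, ψ a q = q := by
  rcases orbit_dichotomy ψ hcont A hAconn with h | htrans
  · exact h
  exfalso
  apply hBkill
  have hfree : ∀ b ∈ B, ψ b ≠ 1 → ∀ x, ψ b x ≠ x := by
    intro b hb hne x hx
    apply hne
    apply Homeomorph.ext; intro z
    obtain ⟨a, ha, haz⟩ := htrans x z
    have hcab : ψ a * ψ b = ψ b * ψ a := by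
      rw [← map_mul, ← map_mul, hcomm a ha b hb]
    calc ψ b z = ψ b (ψ a x) := by rw [haz]
      _ = (ψ b * ψ a) x := rfl
      _ = (ψ a * ψ b) x := by rw [hcab]
      _ = ψ a (ψ b x) := rfl
      _ = ψ a x := by rw [hx]
      _ = z := haz
  set Γ := Subgroup.map ψ B with hΓ
  have hmonoΓ : ∀ g ∈ Γ, StrictMono ⇑g := by
    rintro - ⟨b, hb, rfl⟩
    exact psi_mono ψ hcont b
  have hfreeΓ : ∀ g ∈ Γ, g ≠ 1 → ∀ x : ℝ, g x ≠ x := by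
    rintro - ⟨b, hb, rfl⟩
    exact hfree b hb
  have hab := holder hmonoΓ hfreeΓ
  intro b hb
  obtain ⟨u, hu, v, hv, hbe⟩ := hBperf b hb
  have hcomm2 : ψ u * ψ v = ψ v * ψ u :=
    hab _ ⟨u, hu, rfl⟩ _ ⟨v, hv, rfl⟩
  rw [hbe, map_mul, map_mul, map_mul, map_inv, map_inv, hcomm2]
  group

end Psi2
end S6
namespace S6
open Set

/-- stabilizer transitivity on positives -/
lemma trans_pos {c d : ℝ} (hc : 0 < c) (hd : 0 < d) :
    ∃ s : HomeoC, s ∈ Stab ∧ (s : HH) c = d := by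
  set T := max c d + 1 with hT
  have hcT : c < T := by have := le_max_left c d; simp [hT]; linarith
  have hdT : d < T := by have := le_max_right c d; simp [hT]; linarith
  refine ⟨⟨phiH hc hcT hd hdT, mem_homeoC (phiH_suppIn hc hcT hd hdT)⟩, ?_,
    phiH_u hc hcT hd hdT⟩
  show phiH hc hcT hd hdT 0 = 0
  rw [phiH_apply]
  exact phiFun_id_left hc hcT le_rfl

/-- stabilizer transitivity on negatives -/
lemma trans_neg {c d : ℝ} (hc : c < 0) (hd : d < 0) :
    ∃ s : HomeoC, s ∈ Stab ∧ (s : HH) c = d := by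
  set T := min c d - 1 with hT
  have hcT : T < c := by have := min_le_left c d; simp [hT]; linarith
  have hdT : T < d := by have := min_le_right c d; simp [hT]; linarith
  refine ⟨⟨phiH hcT hc hdT hd, mem_homeoC (phiH_suppIn hcT hc hdT hd)⟩, ?_,
    phiH_u hcT hc hdT hd⟩
  show phiH hcT hc hdT hd 0 = 0
  rw [phiH_apply]
  exact phiFun_id_right hcT hc le_rfl

/-- existence of elements moving `0` anywhere -/
lemma exists_fx (a : ℝ) : ∃ fa : HomeoC, (fa : HH) 0 = a := by
  set T := |a| + 1 with hT
  have h1 : -T < (0:ℝ) := by have := abs_nonneg a; simp [hT]; linarith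
  have h2 : (0:ℝ) < T := by have := abs_nonneg a; simp [hT]; linarith
  have h3 : -T < a := by have := neg_abs_le a; simp [hT]; linarith
  have h4 : a < T := by have := le_abs_self a; simp [hT]; linarith
  exact ⟨⟨phiH h1 h2 h3 h4, mem_homeoC (phiH_suppIn h1 h2 h3 h4)⟩, phiH_u h1 h2 h3 h4⟩

/-- conjugation of `Gplus` by stabilizer elements -/
lemma stab_conj_plus {s b : HomeoC} (hs : s ∈ Stab) (hb : b ∈ Gplus) :
    s⁻¹ * b * s ∈ Gplus := by
  have hmono : StrictMono ⇑(s : HH) := strictMono_of_mem s.2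
  have h1 := suppIn_conj ((s:HH)⁻¹) hb
  rw [inv_inv] at h1
  apply suppIn_mono _ h1
  rintro - ⟨y, hy, rfl⟩
  show 0 < (s:HH).symm y
  have h2 : (s:HH) 0 < (s:HH) ((s:HH).symm y) := by
    rw [(s:HH).apply_symm_apply, hs]
    exact hy
  exact hmono.lt_iff_lt.mp h2

lemma stab_conj_minus {s b : HomeoC} (hs : s ∈ Stab) (hb : b ∈ Gminus) :
    s⁻¹ * b * s ∈ Gminus := by
  have hmono : StrictMono ⇑(s : HH) := strictMono_of_mem s.2
  have h1 := suppIn_conj ((s:HH)⁻¹) hb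
  rw [inv_inv] at h1
  apply suppIn_mono _ h1
  rintro - ⟨y, hy, rfl⟩
  show (s:HH).symm y < 0
  have h2 : (s:HH) ((s:HH).symm y) < (s:HH) 0 := by
    rw [(s:HH).apply_symm_apply, hs]
    exact hy
  exact hmono.lt_iff_lt.mp h2

end S6
namespace S6
open Set

/-- Step C + D : a common fixed point for the stabilizer of `0`. -/
lemma stab_fixed (ψ : HomeoC →* HH) (hcont : Continuous ⇑ψ)
    (hkillp : (∀ b ∈ Gplus, ψ b = 1) → False)
    (hkillm : (∀ b ∈ Gminus, ψ b = 1) → False) :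
    ∃ q : ℝ, ∀ s ∈ Stab, ψ s q = q := by
  obtain ⟨q₁, hq₁⟩ := stepB ψ hcont Gplus Gminus preconn_Gplus
    (fun a ha b hb => comm_Gplus_Gminus ha hb) perf_Gminus hkillm
  set X : Set ℝ := {x | ∀ b ∈ Gplus, ψ b x = x} with hX
  have hXclosed : IsClosed X := by
    have hXeq : X = ⋂ (b : HomeoC), ⋂ (_ : b ∈ Gplus), {x : ℝ | ψ b x = x} := by
      ext x; simp [hX, mem_iInter]
    rw [hXeq]
    exact isClosed_iInter fun b => isClosed_iInter fun _ =>
      isClosed_eq (ψ b).continuous continuous_id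
  have hXne : X.Nonempty := ⟨q₁, fun b hb => hq₁ b hb⟩
  have hXproper : X ≠ univ := by
    intro hu
    apply hkillp
    intro b hb
    apply Homeomorph.ext
    intro x
    have hx : x ∈ X := by rw [hu]; trivial
    exact hx b hb
  have hXinv : ∀ f ∈ Gminus, ∀ x ∈ X, ψ f x ∈ X := by
    intro f hf x hx b hb
    have hc : b * f = f * b := comm_Gplus_Gminus hb hf
    show ψ b (ψ f x) = ψ f x
    calc ψ b (ψ f x) = (ψ b * ψ f) x := rfl
      _ = (ψ f * ψ b) x := by rw [← map_mul, ← map_mul, hc]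
      _ = ψ f (ψ b x) := rfl
      _ = ψ f x := by rw [hx b hb]
  obtain ⟨q₂, hq₂X, hq₂⟩ := fixpt_in_closed ψ hcont Gminus preconn_Gminus X hXne
    hXproper hXclosed hXinv
  set F : Set ℝ := {x | (∀ b ∈ Gplus, ψ b x = x) ∧ ∀ b ∈ Gminus, ψ b x = x} with hF
  have hFclosed : IsClosed F := by
    have hFeq : F = X ∩ {x | ∀ b ∈ Gminus, ψ b x = x} := rfl
    rw [hFeq]
    apply hXclosed.inter
    have h2 : {x : ℝ | ∀ b ∈ Gminus, ψ b x = x}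
        = ⋂ (b : HomeoC), ⋂ (_ : b ∈ Gminus), {x : ℝ | ψ b x = x} := by
      ext x; simp [mem_iInter]
    rw [h2]
    exact isClosed_iInter fun b => isClosed_iInter fun _ =>
      isClosed_eq (ψ b).continuous continuous_id
  have hFne : F.Nonempty := ⟨q₂, hq₂X, hq₂⟩
  have hFproper : F ≠ univ := by
    intro hu
    apply hXproper
    apply eq_univ_of_forall
    intro x
    have hx : x ∈ F := by rw [hu]; trivial
    exact hx.1
  have hFinv : ∀ s ∈ Stab, ∀ x ∈ F, ψ s x ∈ F := by
    intro s hs x hx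
    constructor
    · intro b hb
      have hmem : s⁻¹ * b * s ∈ Gplus := stab_conj_plus hs hb
      have heq : s * (s⁻¹ * b * s) = b * s := by group
      show ψ b (ψ s x) = ψ s x
      calc ψ b (ψ s x) = ψ (b * s) x := by rw [map_mul]; rfl
        _ = ψ (s * (s⁻¹ * b * s)) x := by rw [heq]
        _ = ψ s (ψ (s⁻¹ * b * s) x) := by rw [map_mul]; rfl
        _ = ψ s x := by rw [hx.1 _ hmem]
    · intro b hb
      have hmem : s⁻¹ * b * s ∈ Gminus := stab_conj_minus hs hb
      have heq : s * (s⁻¹ * b * s) = b * s := by group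
      show ψ b (ψ s x) = ψ s x
      calc ψ b (ψ s x) = ψ (b * s) x := by rw [map_mul]; rfl
        _ = ψ (s * (s⁻¹ * b * s)) x := by rw [heq]
        _ = ψ s (ψ (s⁻¹ * b * s) x) := by rw [map_mul]; rfl
        _ = ψ s x := by rw [hx.2 _ hmem]
  obtain ⟨q, hqF, hq⟩ := fixpt_in_closed ψ hcont Stab preconn_Stab F hFne
    hFproper hFclosed hFinv
  exact ⟨q, hq⟩

/-- Step E : maximality — only stabilizer elements fix `q`. -/
lemma stab_only (ψ : HomeoC →* HH)
    (hnofix : ¬ ∃ p : ℝ, ∀ f : HomeoC, ψ f p = p)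
    {q : ℝ} (hq : ∀ s ∈ Stab, ψ s q = q) :
    ∀ f : HomeoC, ψ f q = q → (f : HH) 0 = 0 := by
  intro f hfq
  by_contra hc
  apply hnofix
  refine ⟨q, ?_⟩
  have hfmono : StrictMono ⇑(f : HH) := strictMono_of_mem f.2
  have hfinvq : ψ f⁻¹ q = q := by
    rw [map_inv]
    show (ψ f).symm q = q
    exact ((ψ f).symm_apply_eq).mpr hfq.symm
  have hw : ∀ d : ℝ, ∃ w : HomeoC, ψ w q = q ∧ (w : HH) 0 = d := by
    intro d
    rcases lt_trichotomy ((f : HH) 0) 0 with hc0 | hc0 | hc0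
    · rcases lt_trichotomy d 0 with hd | hd | hd
      · obtain ⟨s, hsS, hsc⟩ := trans_neg hc0 hd
        refine ⟨s * f, ?_, ?_⟩
        · rw [map_mul]
          show ψ s (ψ f q) = q
          rw [hfq]
          exact hq s hsS
        · show (s : HH) ((f : HH) 0) = d
          exact hsc
      · exact ⟨1, by rw [map_one]; rfl, by rw [hd]; rfl⟩
      · have hc'' : 0 < (f : HH).symm 0 := by
          have h2 : (f : HH) 0 < (f : HH) ((f : HH).symm 0) := by
            rw [(f : HH).apply_symm_apply]
            exact hc0
          exact hfmono.lt_iff_lt.mp h2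
        obtain ⟨s, hsS, hsc⟩ := trans_pos hc'' hd
        refine ⟨s * f⁻¹, ?_, ?_⟩
        · rw [map_mul]
          show ψ s (ψ f⁻¹ q) = q
          rw [hfinvq]
          exact hq s hsS
        · show (s : HH) ((f : HH).symm 0) = d
          exact hsc
    · exact absurd hc0 hc
    · rcases lt_trichotomy d 0 with hd | hd | hd
      · have hc'' : (f : HH).symm 0 < 0 := by
          have h2 : (f : HH) ((f : HH).symm 0) < (f : HH) 0 := by
            rw [(f : HH).apply_symm_apply]
            exact hc0
          exact hfmono.lt_iff_lt.mp h2
        obtain ⟨s, hsS, hsc⟩ := trans_neg hc'' hd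
        refine ⟨s * f⁻¹, ?_, ?_⟩
        · rw [map_mul]
          show ψ s (ψ f⁻¹ q) = q
          rw [hfinvq]
          exact hq s hsS
        · show (s : HH) ((f : HH).symm 0) = d
          exact hsc
      · exact ⟨1, by rw [map_one]; rfl, by rw [hd]; rfl⟩
      · obtain ⟨s, hsS, hsc⟩ := trans_pos hc0 hd
        refine ⟨s * f, ?_, ?_⟩
        · rw [map_mul]
          show ψ s (ψ f q) = q
          rw [hfq]
          exact hq s hsS
        · show (s : HH) ((f : HH) 0) = d
          exact hsc
  intro g
  obtain ⟨w, hwq, hw0⟩ := hw ((g : HH) 0)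
  have hu : w⁻¹ * g ∈ Stab := by
    show (w : HH).symm ((g : HH) 0) = 0
    rw [← hw0, Homeomorph.symm_apply_apply]
  have hg : g = w * (w⁻¹ * g) := by group
  rw [hg, map_mul]
  show ψ w (ψ (w⁻¹ * g) q) = q
  rw [hq _ hu, hwq]

end S6
open Set in
/-- Any continuous group morphism `ψ : Homeo_c(ℝ) → Homeo(ℝ)` whose image has no global
fixed point is a conjugacy by some homeomorphism `h` of the line: `ψ(f) = h ∘ f ∘ h⁻¹`. -/
theorem stmt6 (ψ : HomeoC →* (ℝ ≃ₜ ℝ)) (hcont : Continuous ψ)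
    (hnofix : ¬ ∃ p : ℝ, ∀ f : HomeoC, ψ f p = p) :
    ∃ h : ℝ ≃ₜ ℝ, ∀ (f : HomeoC) (x : ℝ), ψ f x = h ((f : ℝ ≃ₜ ℝ) (h.symm x)) := by
  classical
  have hnotriv : ¬ (∀ f : HomeoC, ψ f = 1) := by
    intro h
    exact hnofix ⟨0, fun f => by rw [h f]; rfl⟩
  have hkillp : (∀ b ∈ S6.Gplus, ψ b = 1) → False := fun h => hnotriv (S6.kill_Gplus ψ h)
  have hkillm : (∀ b ∈ S6.Gminus, ψ b = 1) → False := fun h => hnotriv (S6.kill_Gminus ψ h)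
  obtain ⟨q, hq⟩ := S6.stab_fixed ψ hcont hkillp hkillm
  have hstab := S6.stab_only ψ hnofix hq
  have htrans : ∀ z : ℝ, ∃ g : HomeoC, ψ g q = z := by
    rcases S6.orbit_dichotomy ψ hcont ⊤ S6.preconn_top with ⟨p, hp⟩ | ht
    · exact absurd ⟨p, fun f => hp f trivial⟩ hnofix
    · intro z
      obtain ⟨g, -, hg⟩ := ht q z
      exact ⟨g, hg⟩
  choose fx hfx using S6.exists_fx
  set h : ℝ → ℝ := fun a => ψ (fx a) q with hh
  have hq0 : h 0 = q := hq _ (hfx 0)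
  have hequi : ∀ (f : HomeoC) (a : ℝ), ψ f (h a) = h ((f : ℝ ≃ₜ ℝ) a) := by
    intro f a
    set b := (f : ℝ ≃ₜ ℝ) a with hbdef
    set u : HomeoC := (fx b)⁻¹ * (f * fx a) with hudef
    have hu : u ∈ S6.Stab := by
      rw [hudef]
      show ((fx b : ℝ ≃ₜ ℝ)).symm ((f : ℝ ≃ₜ ℝ) ((fx a : ℝ ≃ₜ ℝ) 0)) = 0
      rw [hfx a]
      exact ((fx b : ℝ ≃ₜ ℝ)).symm_apply_eq.mpr (hfx b).symm
    have heq : f * fx a = fx b * u := by rw [hudef]; group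
    calc ψ f (h a) = ψ (f * fx a) q := by rw [map_mul]; rfl
      _ = ψ (fx b) (ψ u q) := by rw [heq, map_mul]; rfl
      _ = ψ (fx b) q := by rw [hq _ hu]
      _ = h b := rfl
  have hsurj : Function.Surjective h := by
    intro z
    obtain ⟨g, hg⟩ := htrans z
    refine ⟨(g : ℝ ≃ₜ ℝ) 0, ?_⟩
    have h2 := hequi g 0
    rw [hq0] at h2
    rw [← h2]
    exact hg
  have hsgn0 : ∀ x y : ℝ, 0 < x → 0 < y → 0 < (h x - q) * (h y - q) := by
    intro x y hx hy
    set e := fun t => S6.lineC (fx x) (fx y) t with he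
    have hΔcont : Continuous fun t => ψ (e t) q - q :=
      (((S6.continuous_eval q).comp (hcont.comp (S6.lineC_continuous _ _)))).sub
        continuous_const
    have hΔne : ∀ t, ψ (e t) q - q ≠ 0 := by
      intro t ht
      have h1 : ψ (e t) q = q := by
        have := sub_eq_zero.mp ht
        linarith [this]
      have h2 := hstab _ h1
      have h3 : ((e t : HomeoC) : ℝ ≃ₜ ℝ) 0 = (1 - S6.proj t) * x + S6.proj t * y := by
        rw [he]
        rw [S6.lineC_apply, hfx, hfx]
      rw [h3] at h2
      obtain ⟨hp0, hp1⟩ := S6.proj_mem t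
      nlinarith [mul_le_mul_of_nonneg_left (min_le_left x y)
          (by linarith : (0:ℝ) ≤ 1 - S6.proj t),
        mul_le_mul_of_nonneg_left (min_le_right x y) hp0, lt_min hx hy]
    have hend0 : ψ (e 0) q - q = h x - q := by
      have he0 : e 0 = fx x := S6.lineC_zero _ _
      rw [he0]
    have hend1 : ψ (e 1) q - q = h y - q := by
      have he1 : e 1 = fx y := S6.lineC_one _ _
      rw [he1]
    by_contra hle
    push_neg at hle
    have himg : IsPreconnected ((fun t => ψ (e t) q - q) '' univ) :=
      isPreconnected_univ.image _ hΔcont.continuousOn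
    have hmem0 : h x - q ∈ (fun t => ψ (e t) q - q) '' univ := ⟨0, mem_univ _, hend0⟩
    have hmem1 : h y - q ∈ (fun t => ψ (e t) q - q) '' univ := ⟨1, mem_univ _, hend1⟩
    have h0mem : (0:ℝ) ∈ (fun t => ψ (e t) q - q) '' univ := by
      rcases mul_nonpos_iff.mp hle with ⟨ha, hb⟩ | ⟨ha, hb⟩
      · exact himg.Icc_subset hmem1 hmem0 ⟨hb, ha⟩
      · exact himg.Icc_subset hmem0 hmem1 ⟨ha, hb⟩
    obtain ⟨t, -, ht⟩ := h0mem
    exact hΔne t ht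
  have hcmp : ∀ a b : ℝ, a < b → 0 < (h b - h a) * (h 1 - h 0) := by
    intro a b hab
    set f := fx a with hfdef
    have hfm : StrictMono ⇑(f : ℝ ≃ₜ ℝ) := S6.strictMono_of_mem f.2
    have hb' : 0 < (f : ℝ ≃ₜ ℝ).symm b := by
      have h2 : (f : ℝ ≃ₜ ℝ) 0 < (f : ℝ ≃ₜ ℝ) ((f : ℝ ≃ₜ ℝ).symm b) := by
        rw [(f : ℝ ≃ₜ ℝ).apply_symm_apply, hfx]
        exact hab
      exact hfm.lt_iff_lt.mp h2
    have e1 : h b = ψ f (h ((f : ℝ ≃ₜ ℝ).symm b)) := by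
      rw [hequi f ((f : ℝ ≃ₜ ℝ).symm b), (f : ℝ ≃ₜ ℝ).apply_symm_apply]
    have e2 : h a = ψ f q := by
      have h3 : h ((f : ℝ ≃ₜ ℝ) 0) = h a := by rw [hfx]
      rw [← h3, ← hequi f 0, hq0]
    have hψm := S6.psi_mono ψ hcont f
    have hs := hsgn0 ((f : ℝ ≃ₜ ℝ).symm b) 1 hb' one_pos
    rcases lt_trichotomy (h ((f : ℝ ≃ₜ ℝ).symm b)) q with hlt | heqq | hgt
    · have hba : h b < h a := by
        rw [e1, e2]
        exact hψm hlt
      rw [hq0]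
      nlinarith
    · exfalso
      rw [heqq] at hs
      simp at hs
    · have hba : h a < h b := by
        rw [e1, e2]
        exact hψm hgt
      rw [hq0]
      nlinarith
  have hinj : Function.Injective h := by
    intro a b hab
    by_contra hne
    rcases lt_or_gt_of_ne hne with hlt | hlt
    · have := hcmp a b hlt
      rw [hab] at this
      simp at this
    · have := hcmp b a hlt
      rw [hab] at this
      simp at this
  -- build the homeomorphism
  have hkey : ∃ H : ℝ ≃ₜ ℝ, ∀ t, H t = h t := by
    rcases lt_or_gt_of_ne (fun hcc : h 1 - h 0 = 0 =>
        one_ne_zero (hinj (by linarith [sub_eq_zero.mp hcc] : h 1 = h 0))) with hσ | hσ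
    · -- h 1 - h 0 < 0 : h is strictly decreasing
      have hanti : StrictAnti h := by
        intro a b hab
        have := hcmp a b hab
        nlinarith
      have hmono' : StrictMono fun t => h (-t) := by
        intro a b hab
        exact hanti (by linarith : -b < -a)
      have hsurj' : Function.Surjective fun t => h (-t) := by
        intro z
        obtain ⟨t, ht⟩ := hsurj z
        exact ⟨-t, by show h (-(-t)) = z; rw [neg_neg]; exact ht⟩
      refine ⟨(Homeomorph.neg ℝ).trans (S6.mk _ hmono' hsurj'), fun t => ?_⟩
      show h (-((Homeomorph.neg ℝ) t)) = h t
      have : (Homeomorph.neg ℝ) t = -t := rfl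
      rw [this, neg_neg]
    · -- h strictly increasing
      have hmono : StrictMono h := by
        intro a b hab
        have := hcmp a b hab
        nlinarith
      exact ⟨S6.mk h hmono hsurj, fun t => rfl⟩
  obtain ⟨H, hHcoe⟩ := hkey
  refine ⟨H, ?_⟩
  intro f x
  have h1 : H (H.symm x) = x := H.apply_symm_apply x
  have h2 : h (H.symm x) = x := by rw [← hHcoe, h1]
  calc ψ f x = ψ f (h (H.symm x)) := by rw [h2]
    _ = h ((f : ℝ ≃ₜ ℝ) (H.symm x)) := hequi f _
    _ = H ((f : ℝ ≃ₜ ℝ) (H.symm x)) := (hHcoe _).symm
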